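/- arXiv:2312.11136 — 12 statements merged into one kernel-verified Lean document; each statement's English description precedes it below -/
import Mathlib

section
/- Let X : Ω → 𝒳 and C : Ω → 𝒞 be random variables with countable ranges, Z : Ω → {0,1}, and Y₁, Y₀ integrable real random variables. Define Y := Z·Y₁ + (1−Z)·Y₀ (consistency). Fix x ∈ 𝒳, c ∈ 𝒞, z ∈ {0,1} with P({X=x} ∩ {Z=z} ∩ {C=c}) > 0, and assume that under the conditional measure P(· | X=x) the random variable Z is independent of the triple (Y₁, Y₀, C). Then E[Y_z | {X=x} ∩ {C=c}] = E[Y | {X=x} ∩ {Z=z} ∩ {C=c}]. -/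
open MeasureTheory ProbabilityTheory
open scoped Classical

/-- Conditional probability of `A` given `B`: `P(A | B) := P(A ∩ B) / P(B)`. -/
noncomputable def cPr {Ω : Type*} [MeasurableSpace Ω] (P : Measure Ω) (A B : Set Ω) : ℝ :=
  (P (A ∩ B)).toReal / (P B).toReal

/-- Conditional expectation of `W` given event `B`: `E[W | B] := E[W·1_B] / P(B)`. -/
noncomputable def cExp {Ω : Type*} [MeasurableSpace Ω] (P : Measure Ω) (W : Ω → ℝ) (B : Set Ω) : ℝ :=
  (∫ ω in B, W ω ∂P) / (P B).toReal

lemma cExp_cond {Ω : Type*} [MeasurableSpace Ω] (P : Measure Ω) [IsProbabilityMeasure P]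
    {A : Set Ω} (hA : MeasurableSet A) (hA0 : P A ≠ 0) (h : Ω → ℝ) {S : Set Ω}
    (hS : MeasurableSet S) :
    cExp (P[|A]) h S = cExp P h (A ∩ S) := by
  have hAtop : P A ≠ ⊤ := measure_ne_top P A
  have h1 : (P[|A]).restrict S = (P A)⁻¹ • P.restrict (A ∩ S) := by
    rw [ProbabilityTheory.cond, Measure.restrict_smul, Measure.restrict_restrict hS,
      Set.inter_comm]
  have h2 : (P[|A]) S = (P A)⁻¹ * P (A ∩ S) := cond_apply hA P S
  have h3 : (P A).toReal⁻¹ ≠ 0 := inv_ne_zero (ENNReal.toReal_ne_zero.mpr ⟨hA0, hAtop⟩)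
  unfold cExp
  rw [h1, integral_smul_measure, h2, ENNReal.toReal_mul, ENNReal.toReal_inv, smul_eq_mul,
    mul_div_mul_left _ _ h3]

/-- Under treatment assignment ignorability given `X = x` (independence of `Z` from the
triple `(Y₁, Y₀, C)` under `P(· | X=x)`) and consistency `Y = Z·Y₁ + (1−Z)·Y₀`, the mean
of the potential outcome `Y_z` given `{X=x} ∩ {C=c}` equals the mean of the observed
outcome `Y` given `{X=x} ∩ {Z=z} ∩ {C=c}`. -/
theorem stmt2 {Ω 𝒳 𝒞 : Type*} [MeasurableSpace Ω]
    [Countable 𝒳] [MeasurableSpace 𝒳] [MeasurableSingletonClass 𝒳]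
    [Countable 𝒞] [MeasurableSpace 𝒞] [MeasurableSingletonClass 𝒞]
    (P : Measure Ω) [IsProbabilityMeasure P]
    (X : Ω → 𝒳) (C : Ω → 𝒞) (Z : Ω → Fin 2) (Y₁ Y₀ : Ω → ℝ)
    (hX : Measurable X) (hC : Measurable C) (hZ : Measurable Z)
    (hY₁m : Measurable Y₁) (hY₀m : Measurable Y₀)
    (hY₁int : Integrable Y₁ P) (hY₀int : Integrable Y₀ P)
    (Y : Ω → ℝ)
    (hYdef : Y = fun ω => ((Z ω : ℕ) : ℝ) * Y₁ ω + (1 - ((Z ω : ℕ) : ℝ)) * Y₀ ω)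
    (x : 𝒳) (c : 𝒞) (z : Fin 2)
    (hpos : 0 < P (X ⁻¹' {x} ∩ Z ⁻¹' {z} ∩ C ⁻¹' {c}))
    (hindep : IndepFun Z (fun ω => (Y₁ ω, Y₀ ω, C ω)) (P[|X ⁻¹' {x}])) :
    cExp P (if z = 1 then Y₁ else Y₀) (X ⁻¹' {x} ∩ C ⁻¹' {c})
      = cExp P Y (X ⁻¹' {x} ∩ Z ⁻¹' {z} ∩ C ⁻¹' {c}) := by
  set A := X ⁻¹' {x} with hA_def
  set Zs := Z ⁻¹' {z} with hZs_def
  set Cs := C ⁻¹' {c} with hCs_def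
  set Yz := (if z = 1 then Y₁ else Y₀) with hYz_def
  have hAm : MeasurableSet A := hX (measurableSet_singleton x)
  have hZm : MeasurableSet Zs := hZ (measurableSet_singleton z)
  have hCm : MeasurableSet Cs := hC (measurableSet_singleton c)
  have hYzm : Measurable Yz := by rw [hYz_def]; split_ifs <;> assumption
  have hA0 : P A ≠ 0 := by
    intro h0
    have : P (A ∩ Zs ∩ Cs) ≤ P A := measure_mono (fun ω hω => hω.1.1)
    rw [h0] at this
    exact absurd (le_antisymm this zero_le) (ne_of_gt hpos)
  set Q := P[|A] with hQ_def
  haveI hQprob : IsProbabilityMeasure Q := cond_isProbabilityMeasure hA0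
  -- Step 0: on the event Zs, Y = Yz
  have hYeq : Set.EqOn Y Yz (A ∩ Zs ∩ Cs) := by
    intro ω hω
    have hzω : Z ω = z := hω.1.2
    rw [hYdef, hYz_def]
    fin_cases z <;> simp_all
  have hnum : (∫ ω in A ∩ Zs ∩ Cs, Y ω ∂P) = ∫ ω in A ∩ Zs ∩ Cs, Yz ω ∂P :=
    setIntegral_congr_fun ((hAm.inter hZm).inter hCm) hYeq
  have hrw1 : A ∩ Zs ∩ Cs = A ∩ (Zs ∩ Cs) := Set.inter_assoc A Zs Cs
  have key : cExp Q Yz Cs = cExp Q Yz (Zs ∩ Cs) := by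
    -- independence machinery
    set W : Ω → ℝ × ℝ × 𝒞 := fun ω => (Y₁ ω, Y₀ ω, C ω) with hW_def
    have hWm : Measurable W := (hY₁m.prodMk (hY₀m.prodMk hC))
    set f : Fin 2 → ℝ := fun w => if w = z then 1 else 0 with hf_def
    set g : ℝ × ℝ × 𝒞 → ℝ :=
      fun p => if p.2.2 = c then (if z = 1 then p.1 else p.2.1) else 0 with hg_def
    have hfm : Measurable f := measurable_of_countable f
    have hgm : Measurable g := by
      apply Measurable.ite
      · exact (measurable_snd.snd) (measurableSet_singleton c)
      · split_ifs
        · exact measurable_fst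
        · exact measurable_snd.fst
      · exact measurable_const
    have hcomp : IndepFun (f ∘ Z) (g ∘ W) Q := hindep.comp hfm hgm
    have hfZ : (f ∘ Z) = Set.indicator Zs (fun _ => (1 : ℝ)) := by
      funext ω
      by_cases hω : Z ω = z <;>
        simp [hf_def, Set.indicator, hω, hZs_def, Function.comp]
    have hgW : (g ∘ W) = Set.indicator Cs Yz := by
      funext ω
      by_cases hω : C ω = c <;>
        simp [hg_def, hW_def, Set.indicator, hω, hCs_def, hYz_def, Function.comp, ite_apply]
    have hprod : (f ∘ Z) * (g ∘ W) = Set.indicator (Zs ∩ Cs) Yz := by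
      funext ω
      rw [hfZ, hgW]
      by_cases h1 : ω ∈ Zs <;> by_cases h2 : ω ∈ Cs <;>
        simp [Set.indicator, h1, h2]
    have hmul : ∫ ω, ((f ∘ Z) * (g ∘ W)) ω ∂Q = (∫ ω, (f ∘ Z) ω ∂Q) * ∫ ω, (g ∘ W) ω ∂Q :=
      hcomp.integral_mul_eq_mul_integral ((hfm.comp hZ).aestronglyMeasurable)
        ((hgm.comp hWm).aestronglyMeasurable)
    have e1 : ∫ ω, ((f ∘ Z) * (g ∘ W)) ω ∂Q = ∫ ω in Zs ∩ Cs, Yz ω ∂Q := by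
      rw [hprod, integral_indicator (hZm.inter hCm)]
    have e2 : ∫ ω, (f ∘ Z) ω ∂Q = (Q Zs).toReal := by
      rw [hfZ, integral_indicator hZm]
      simp
      rfl
    have e3 : ∫ ω, (g ∘ W) ω ∂Q = ∫ ω in Cs, Yz ω ∂Q := by
      rw [hgW, integral_indicator hCm]
    -- measure factorization
    have hWC : W ⁻¹' (Set.univ ×ˢ Set.univ ×ˢ {c}) = Cs := by
      ext ω; simp [hW_def, hCs_def, eq_comm]
    have hmeas : Q (Zs ∩ Cs) = Q Zs * Q Cs := by
      have := hindep.measure_inter_preimage_eq_mul {z} (Set.univ ×ˢ Set.univ ×ˢ {c})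
        (measurableSet_singleton z)
        (MeasurableSet.univ.prod (MeasurableSet.univ.prod (measurableSet_singleton c)))
      rwa [hWC] at this
    -- positivity of Q Zs
    have hQZC0 : Q (Zs ∩ Cs) ≠ 0 := by
      rw [hQ_def, cond_apply hAm, ← hrw1]
      exact mul_ne_zero (ENNReal.inv_ne_zero.mpr (measure_ne_top P A)) (ne_of_gt hpos)
    have hQZ0 : (Q Zs).toReal ≠ 0 := by
      refine ENNReal.toReal_ne_zero.mpr ⟨?_, measure_ne_top Q Zs⟩
      intro h0
      exact hQZC0 (by rw [hmeas, h0, zero_mul])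
    -- conclude
    unfold cExp
    rw [e1, e2, e3] at hmul
    rw [hmul, hmeas, ENNReal.toReal_mul, mul_div_mul_left _ _ hQZ0]
  calc cExp P Yz (A ∩ Cs) = cExp Q Yz Cs := (cExp_cond P hAm hA0 Yz hCm).symm
    _ = cExp Q Yz (Zs ∩ Cs) := key
    _ = cExp P Yz (A ∩ (Zs ∩ Cs)) := cExp_cond P hAm hA0 Yz (hZm.inter hCm)
    _ = cExp P Y (A ∩ Zs ∩ Cs) := by
        unfold cExp
        rw [← hrw1, hnum]
end

section
/- Let X : Ω → 𝒳 have countable range, Z, C, R : Ω → {0,1}, and Y an integrable real random variable. Fix x ∈ 𝒳 and assume for both c ∈ {0,1}: P({X=x} ∩ {Z=0} ∩ {C=c} ∩ {R=1}) > 0, and under the conditional measure P(· | {X=x} ∩ {Z=0} ∩ {C=c}) the random variables R and Y are independent (latent missing at random). Then E[Y | {X=x} ∩ {Z=0} ∩ {R=1}] = Σ_{c ∈ {0,1}} E[Y | {X=x} ∩ {Z=0} ∩ {C=c}] · P(C=c | {X=x} ∩ {Z=0} ∩ {R=1}). -/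
open MeasureTheory ProbabilityTheory
open scoped Classical

lemma cond_integral_eq {Ω : Type*} [MeasurableSpace Ω] (P : Measure Ω)
    (B : Set Ω) (g : Ω → ℝ) :
    ∫ ω, g ω ∂(P[|B]) = (P B).toReal⁻¹ * ∫ ω in B, g ω ∂P := by
  rw [ProbabilityTheory.cond, integral_smul_measure, ENNReal.toReal_inv, smul_eq_mul]

/-- The outcome mixture equation under latent missing at random (LMAR): the mean of the
outcome among control-arm responders is the mixture of the stratum-specific conditional
outcome means with weights `P(C=c | {X=x} ∩ {Z=0} ∩ {R=1})`. -/
theorem stmt6 {Ω 𝒳 : Type*} [MeasurableSpace Ω]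
    [Countable 𝒳] [MeasurableSpace 𝒳] [MeasurableSingletonClass 𝒳]
    (P : Measure Ω) [IsProbabilityMeasure P]
    (X : Ω → 𝒳) (Z C R : Ω → Fin 2) (Y : Ω → ℝ)
    (hX : Measurable X) (hZ : Measurable Z) (hC : Measurable C) (hR : Measurable R)
    (hYm : Measurable Y) (hYint : Integrable Y P)
    (x : 𝒳)
    (hpos : ∀ c : Fin 2, 0 < P (X ⁻¹' {x} ∩ Z ⁻¹' {0} ∩ C ⁻¹' {c} ∩ R ⁻¹' {1}))
    (hLMAR : ∀ c : Fin 2, IndepFun R Y (P[|X ⁻¹' {x} ∩ Z ⁻¹' {0} ∩ C ⁻¹' {c}])) :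
    cExp P Y (X ⁻¹' {x} ∩ Z ⁻¹' {0} ∩ R ⁻¹' {1})
      = ∑ c : Fin 2, cExp P Y (X ⁻¹' {x} ∩ Z ⁻¹' {0} ∩ C ⁻¹' {c})
          * cPr P (C ⁻¹' {c}) (X ⁻¹' {x} ∩ Z ⁻¹' {0} ∩ R ⁻¹' {1}) := by
  set A : Set Ω := X ⁻¹' {x} ∩ Z ⁻¹' {0} with hA
  set R1 : Set Ω := R ⁻¹' {1} with hR1def
  have hAm : MeasurableSet A :=
    (hX (measurableSet_singleton x)).inter (hZ (measurableSet_singleton 0))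
  have hR1m : MeasurableSet R1 := hR (measurableSet_singleton 1)
  have hBm : ∀ c : Fin 2, MeasurableSet (A ∩ C ⁻¹' {c}) :=
    fun c => hAm.inter (hC (measurableSet_singleton c))
  have hBpos : ∀ c : Fin 2, P (A ∩ C ⁻¹' {c}) ≠ 0 := by
    intro c
    have h := hpos c
    intro h0
    exact absurd
      (le_antisymm (le_trans (measure_mono (Set.inter_subset_left)) h0.le) zero_le) h.ne'
  -- key: stratum-wise factorization from independence
  have key : ∀ c : Fin 2,
      ∫ ω in A ∩ C ⁻¹' {c} ∩ R1, Y ω ∂P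
        = cExp P Y (A ∩ C ⁻¹' {c}) * (P (A ∩ C ⁻¹' {c} ∩ R1)).toReal := by
    intro c
    set B : Set Ω := A ∩ C ⁻¹' {c} with hB
    have hBm' : MeasurableSet B := hBm c
    have hBne : P B ≠ 0 := hBpos c
    haveI : IsProbabilityMeasure (P[|B]) := cond_isProbabilityMeasure hBne
    set μ := P[|B] with hμ
    set f : Fin 2 → ℝ := fun r => if r = 1 then (1:ℝ) else 0 with hf
    have hfm : Measurable f := measurable_of_countable f
    have hind : IndepFun (f ∘ R) Y μ := (hLMAR c).comp hfm measurable_id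
    have hfR : (f ∘ R) = Set.indicator R1 (fun _ => (1:ℝ)) := by
      funext ω
      by_cases h : R ω = 1 <;> simp [hf, hR1def, Set.indicator, h]
    have hmul : ∫ ω, (f ∘ R) ω * Y ω ∂μ = (∫ ω, (f ∘ R) ω ∂μ) * ∫ ω, Y ω ∂μ :=
      hind.integral_fun_mul_eq_mul_integral ((hfm.comp hR).aestronglyMeasurable) hYm.aestronglyMeasurable
    have h1 : ∫ ω, (f ∘ R) ω ∂μ = (μ R1).toReal := by
      rw [hfR, integral_indicator hR1m]
      simp
      rfl
    have h2 : ∫ ω, (f ∘ R) ω * Y ω ∂μ = ∫ ω in R1, Y ω ∂μ := by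
      rw [← integral_indicator hR1m]
      congr 1
      funext ω
      by_cases h : ω ∈ R1
      · have hRω : R ω = 1 := h
        simp [hf, hRω, Set.indicator_of_mem h]
      · have hRω : R ω ≠ 1 := h
        simp [hf, hRω, Set.indicator_of_notMem h]
    -- translate everything to P
    have hABfin : P B ≠ ⊤ := measure_ne_top P B
    have hPBpos : 0 < (P B).toReal := ENNReal.toReal_pos hBne hABfin
    have hμR1 : (μ R1).toReal = (P B).toReal⁻¹ * (P (B ∩ R1)).toReal := by
      rw [hμ, cond_apply hBm', ENNReal.toReal_mul, ENNReal.toReal_inv]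
    have hYμ : ∫ ω, Y ω ∂μ = (P B).toReal⁻¹ * ∫ ω in B, Y ω ∂P := cond_integral_eq P B Y
    have hLHS : ∫ ω in R1, Y ω ∂μ = (P B).toReal⁻¹ * ∫ ω in B ∩ R1, Y ω ∂P := by
      have : ∫ ω in R1, Y ω ∂μ = ∫ ω, Set.indicator R1 Y ω ∂μ :=
        (integral_indicator hR1m).symm
      rw [this, cond_integral_eq P B (Set.indicator R1 Y),
        integral_indicator hR1m, Measure.restrict_restrict hR1m, Set.inter_comm R1 B]
    rw [h2, h1, hμR1, hYμ] at hmul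
    rw [hmul] at hLHS
    have hcexp : cExp P Y B = (∫ ω in B, Y ω ∂P) / (P B).toReal := rfl
    field_simp [hcexp] at hLHS ⊢
    apply mul_right_cancel₀ hPBpos.ne'
    rw [hcexp, mul_assoc, div_mul_cancel₀ _ hPBpos.ne']; linarith [hLHS]
  -- split A ∩ R1 into the two strata
  have hdisj : Disjoint (A ∩ C ⁻¹' {(0:Fin 2)} ∩ R1) (A ∩ C ⁻¹' {(1:Fin 2)} ∩ R1) := by
    rw [Set.disjoint_iff]
    rintro ω ⟨⟨⟨-, h0⟩, -⟩, ⟨⟨-, h1⟩, -⟩⟩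
    simp only [Set.mem_preimage, Set.mem_singleton_iff] at h0 h1
    exact absurd (h0 ▸ h1) (by decide)
  have hunion : A ∩ R1 = (A ∩ C ⁻¹' {(0:Fin 2)} ∩ R1) ∪ (A ∩ C ⁻¹' {(1:Fin 2)} ∩ R1) := by
    ext ω
    constructor
    · rintro ⟨hωA, hωR⟩
      have : C ω = 0 ∨ C ω = 1 := by omega
      rcases this with h | h
      · exact Or.inl ⟨⟨hωA, h⟩, hωR⟩
      · exact Or.inr ⟨⟨hωA, h⟩, hωR⟩
    · rintro (⟨⟨hωA, -⟩, hωR⟩ | ⟨⟨hωA, -⟩, hωR⟩) <;> exact ⟨hωA, hωR⟩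
  have hsplit : ∫ ω in A ∩ R1, Y ω ∂P
      = (∫ ω in A ∩ C ⁻¹' {(0:Fin 2)} ∩ R1, Y ω ∂P)
        + ∫ ω in A ∩ C ⁻¹' {(1:Fin 2)} ∩ R1, Y ω ∂P := by
    rw [hunion]
    exact setIntegral_union hdisj ((hBm 1).inter hR1m)
      (hYint.integrableOn) (hYint.integrableOn)
  have hPsplit : P (A ∩ R1)
      = P (A ∩ C ⁻¹' {(0:Fin 2)} ∩ R1) + P (A ∩ C ⁻¹' {(1:Fin 2)} ∩ R1) := by
    rw [hunion]
    exact measure_union hdisj ((hBm 1).inter hR1m)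
  -- the weights
  have hw : ∀ c : Fin 2, cPr P (C ⁻¹' {c}) (A ∩ R1)
      = (P (A ∩ C ⁻¹' {c} ∩ R1)).toReal / (P (A ∩ R1)).toReal := by
    intro c
    have : C ⁻¹' {c} ∩ (A ∩ R1) = A ∩ C ⁻¹' {c} ∩ R1 := by
      ext ω; constructor
      · rintro ⟨h1, h2, h3⟩; exact ⟨⟨h2, h1⟩, h3⟩
      · rintro ⟨⟨h1, h2⟩, h3⟩; exact ⟨h2, h1, h3⟩
    rw [cPr, this]
  rw [cExp, Fin.sum_univ_two, hw 0, hw 1, hsplit, key 0, key 1]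
  ring
end

section
/- Let X : Ω → 𝒳 have countable range, Z, C, R : Ω → {0,1}, and Y : Ω → ℝ a random variable. Fix x ∈ 𝒳 and assume for both c ∈ {0,1}: P({X=x} ∩ {Z=0} ∩ {C=c}) > 0; under the conditional measure P(· | {X=x} ∩ {Z=0} ∩ {C=c}) the random variables R and Y are independent (latent missing at random); and P(R=1 | {X=x} ∩ {Z=0} ∩ {C=c}) = P(R=1 | {X=x} ∩ {Z=0}) (response principal ignorability). Then under the conditional measure P(· | {X=x} ∩ {Z=0}) the random variables R and Y are independent; i.e., the outcome is missing at random in the control arm. -/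
open MeasureTheory ProbabilityTheory
open scoped Classical

/-- LMAR combined with response principal ignorability (rPI) implies the outcome is
missing at random (MAR) in the control arm: `R ⫫ Y` under `P(· | {X=x} ∩ {Z=0})`. -/
theorem stmt7 {Ω 𝒳 : Type*} [MeasurableSpace Ω]
    [Countable 𝒳] [MeasurableSpace 𝒳] [MeasurableSingletonClass 𝒳]
    (P : Measure Ω) [IsProbabilityMeasure P]
    (X : Ω → 𝒳) (Z C R : Ω → Fin 2) (Y : Ω → ℝ)
    (hX : Measurable X) (hZ : Measurable Z) (hC : Measurable C) (hR : Measurable R)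
    (hYm : Measurable Y)
    (x : 𝒳)
    (hpos : ∀ c : Fin 2, 0 < P (X ⁻¹' {x} ∩ Z ⁻¹' {0} ∩ C ⁻¹' {c}))
    (hLMAR : ∀ c : Fin 2, IndepFun R Y (P[|X ⁻¹' {x} ∩ Z ⁻¹' {0} ∩ C ⁻¹' {c}]))
    (hrPI : ∀ c : Fin 2, cPr P (R ⁻¹' {1}) (X ⁻¹' {x} ∩ Z ⁻¹' {0} ∩ C ⁻¹' {c})
        = cPr P (R ⁻¹' {1}) (X ⁻¹' {x} ∩ Z ⁻¹' {0})) :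
    IndepFun R Y (P[|X ⁻¹' {x} ∩ Z ⁻¹' {0}]) := by
  set B : Set Ω := X ⁻¹' {x} ∩ Z ⁻¹' {0} with hBdef
  have hmB : MeasurableSet B := (hX (measurableSet_singleton x)).inter (hZ (measurableSet_singleton 0))
  set B0 : Set Ω := B ∩ C ⁻¹' {(0 : Fin 2)} with hB0def
  set B1 : Set Ω := B ∩ C ⁻¹' {(1 : Fin 2)} with hB1def
  have hmB0 : MeasurableSet B0 := hmB.inter (hC (measurableSet_singleton 0))
  have hmB1 : MeasurableSet B1 := hmB.inter (hC (measurableSet_singleton 1))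
  have hB0pos : P B0 ≠ 0 := (hpos 0).ne'
  have hB1pos : P B1 ≠ 0 := (hpos 1).ne'
  have hunion : B = B0 ∪ B1 := by
    ext ω
    simp only [hB0def, hB1def, Set.mem_union, Set.mem_inter_iff, Set.mem_preimage,
      Set.mem_singleton_iff]
    have : C ω = 0 ∨ C ω = 1 := by omega
    tauto
  have hdisj : Disjoint B0 B1 := by
    apply Set.disjoint_left.mpr
    rintro ω ⟨-, h0⟩ ⟨-, h1⟩
    simp only [Set.mem_preimage, Set.mem_singleton_iff] at h0 h1
    rw [h0] at h1; exact absurd h1 (by decide)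
  have hBpos : P B ≠ 0 := by
    rw [hunion]
    intro h
    exact hB0pos (measure_mono_null Set.subset_union_left h)
  have hBne : P B ≠ ⊤ := measure_ne_top P B
  have hB0ne : P B0 ≠ ⊤ := measure_ne_top P B0
  have hB1ne : P B1 ≠ ⊤ := measure_ne_top P B1
  haveI : IsProbabilityMeasure (P[|B]) := cond_isProbabilityMeasure hBpos
  haveI : IsProbabilityMeasure (P[|B0]) := cond_isProbabilityMeasure hB0pos
  haveI : IsProbabilityMeasure (P[|B1]) := cond_isProbabilityMeasure hB1pos
  -- splitting lemma
  have hsplit : ∀ E : Set Ω, MeasurableSet E →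
      P[|B] E = (P B0 * (P B)⁻¹) * (P[|B0]) E + (P B1 * (P B)⁻¹) * (P[|B1]) E := by
    intro E hE
    rw [cond_apply hmB, cond_apply hmB0, cond_apply hmB1]
    have hBE : B ∩ E = (B0 ∩ E) ∪ (B1 ∩ E) := by
      rw [hunion, Set.union_inter_distrib_right]
    rw [hBE, measure_union (hdisj.mono Set.inter_subset_left Set.inter_subset_left)
      (hmB1.inter hE)]
    have h0 : P B0 * (P B)⁻¹ * ((P B0)⁻¹ * P (B0 ∩ E)) = (P B)⁻¹ * P (B0 ∩ E) := by
      rw [mul_comm (P B0) (P B)⁻¹, mul_assoc, ← mul_assoc (P B0),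
        ENNReal.mul_inv_cancel hB0pos hB0ne, one_mul]
    have h1 : P B1 * (P B)⁻¹ * ((P B1)⁻¹ * P (B1 ∩ E)) = (P B)⁻¹ * P (B1 ∩ E) := by
      rw [mul_comm (P B1) (P B)⁻¹, mul_assoc, ← mul_assoc (P B1),
        ENNReal.mul_inv_cancel hB1pos hB1ne, one_mul]
    rw [h0, h1, mul_add]
  have hwsum : P B0 * (P B)⁻¹ + P B1 * (P B)⁻¹ = 1 := by
    rw [← add_mul, ← measure_union hdisj hmB1, ← hunion, ENNReal.mul_inv_cancel hBpos hBne]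
  -- rPI in ENNReal form
  have hrPI' : ∀ c : Fin 2, (P[|B ∩ C ⁻¹' {c}]) (R ⁻¹' {1}) = (P[|B]) (R ⁻¹' {1}) := by
    intro c
    have hmBc : MeasurableSet (B ∩ C ⁻¹' {c}) := hmB.inter (hC (measurableSet_singleton c))
    have hc := hrPI c
    have key : ∀ (D : Set Ω), MeasurableSet D → P D ≠ 0 →
        ((P[|D]) (R ⁻¹' {1})).toReal = cPr P (R ⁻¹' {1}) D := by
      intro D hD hD0
      rw [cond_apply hD, cPr, ENNReal.toReal_mul, ENNReal.toReal_inv, Set.inter_comm,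
        div_eq_inv_mul]
    rw [← key _ hmBc (hpos c).ne', ← key _ hmB hBpos] at hc
    exact (ENNReal.toReal_eq_toReal_iff' (measure_ne_top _ _) (measure_ne_top _ _)).mp hc
  -- hence P(R ∈ s | Bc) = P(R ∈ s | B) for every s
  have hRconst : ∀ (s : Set (Fin 2)) (c : Fin 2),
      (P[|B ∩ C ⁻¹' {c}]) (R ⁻¹' s) = (P[|B]) (R ⁻¹' s) := by
    intro s c
    haveI : IsProbabilityMeasure (P[|B ∩ C ⁻¹' {c}]) :=
      cond_isProbabilityMeasure (hpos c).ne'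
    by_cases h1 : (1 : Fin 2) ∈ s <;> by_cases h0 : (0 : Fin 2) ∈ s
    · have : R ⁻¹' s = Set.univ := by
        ext ω; simp only [Set.mem_preimage, Set.mem_univ, iff_true]
        have : R ω = 0 ∨ R ω = 1 := by omega
        rcases this with h | h <;> rw [h] <;> assumption
      rw [this, measure_univ, measure_univ]
    · have : R ⁻¹' s = R ⁻¹' {1} := by
        ext ω; simp only [Set.mem_preimage, Set.mem_singleton_iff]
        have : R ω = 0 ∨ R ω = 1 := by omega
        constructor
        · intro hmem
          rcases this with h | h
          · rw [h] at hmem; exact absurd hmem h0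
          · exact h
        · intro h; rw [h]; exact h1
      rw [this, hrPI' c]
    · have : R ⁻¹' s = (R ⁻¹' {1})ᶜ := by
        ext ω; simp only [Set.mem_preimage, Set.mem_compl_iff, Set.mem_singleton_iff]
        have : R ω = 0 ∨ R ω = 1 := by omega
        constructor
        · intro hmem h
          rw [h] at hmem; exact h1 hmem
        · intro h
          rcases this with h' | h'
          · rw [h']; exact h0
          · exact absurd h' h
      have hm1 : MeasurableSet (R ⁻¹' {(1 : Fin 2)}) := hR (measurableSet_singleton 1)
      rw [this, prob_compl_eq_one_sub hm1, prob_compl_eq_one_sub hm1, hrPI' c]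
    · have : R ⁻¹' s = (∅ : Set Ω) := by
        ext ω; simp only [Set.mem_preimage, Set.mem_empty_iff_false, iff_false]
        intro hmem
        have : R ω = 0 ∨ R ω = 1 := by omega
        rcases this with h | h
        · rw [h] at hmem; exact h0 hmem
        · rw [h] at hmem; exact h1 hmem
      rw [this, measure_empty, measure_empty]
  -- conclude
  rw [indepFun_iff_measure_inter_preimage_eq_mul]
  intro s t hs ht
  have hL0 := (indepFun_iff_measure_inter_preimage_eq_mul.mp (hLMAR 0)) s t hs ht
  have hL1 := (indepFun_iff_measure_inter_preimage_eq_mul.mp (hLMAR 1)) s t hs ht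
  have hRs : MeasurableSet (R ⁻¹' s) := hR hs
  have hYt : MeasurableSet (Y ⁻¹' t) := hYm ht
  have e0 : B ∩ C ⁻¹' {(0 : Fin 2)} = B0 := rfl
  have e1 : B ∩ C ⁻¹' {(1 : Fin 2)} = B1 := rfl
  rw [e0] at hL0; rw [e1] at hL1
  have ha0 : (P[|B0]) (R ⁻¹' s) = (P[|B]) (R ⁻¹' s) := by rw [← e0]; exact hRconst s 0
  have ha1 : (P[|B1]) (R ⁻¹' s) = (P[|B]) (R ⁻¹' s) := by rw [← e1]; exact hRconst s 1
  rw [hsplit _ (hRs.inter hYt), hL0, hL1, ha0, ha1, hsplit _ hYt]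
  set a := (P[|B]) (R ⁻¹' s)
  ring
end

section
/- Let X : Ω → 𝒳 have countable range, Z, C, R : Ω → {0,1}, and Y : Ω → ℝ a random variable. Fix x ∈ 𝒳 and assume: P({X=x} ∩ {Z=0} ∩ {C=c}) > 0 for both c ∈ {0,1}; under the conditional measure P(· | {X=x} ∩ {Z=0} ∩ {C=c}) the random variables R and Y are independent for both c ∈ {0,1} (latent missing at random); and under the conditional measure P(· | {X=x} ∩ {Z=0}) the random variables C and Y are independent (principal ignorability). Then under the conditional measure P(· | {X=x} ∩ {Z=0}) the random variables R and Y are independent; i.e., the outcome is missing at random in the control arm. -/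
open MeasureTheory ProbabilityTheory
open scoped Classical

/-- LMAR combined with principal ignorability (PI, stated as independence of `C` and `Y`
in the control arm given `X = x`) implies the outcome is missing at random (MAR) in the
control arm: `R ⫫ Y` under `P(· | {X=x} ∩ {Z=0})`. -/
theorem stmt8 {Ω 𝒳 : Type*} [MeasurableSpace Ω]
    [Countable 𝒳] [MeasurableSpace 𝒳] [MeasurableSingletonClass 𝒳]
    (P : Measure Ω) [IsProbabilityMeasure P]
    (X : Ω → 𝒳) (Z C R : Ω → Fin 2) (Y : Ω → ℝ)
    (hX : Measurable X) (hZ : Measurable Z) (hC : Measurable C) (hR : Measurable R)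
    (hYm : Measurable Y)
    (x : 𝒳)
    (hpos : ∀ c : Fin 2, 0 < P (X ⁻¹' {x} ∩ Z ⁻¹' {0} ∩ C ⁻¹' {c}))
    (hLMAR : ∀ c : Fin 2, IndepFun R Y (P[|X ⁻¹' {x} ∩ Z ⁻¹' {0} ∩ C ⁻¹' {c}]))
    (hPI : IndepFun C Y (P[|X ⁻¹' {x} ∩ Z ⁻¹' {0}])) :
    IndepFun R Y (P[|X ⁻¹' {x} ∩ Z ⁻¹' {0}]) := by
  set S : Set Ω := X ⁻¹' {x} ∩ Z ⁻¹' {0} with hS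
  have hmS : MeasurableSet S := (hX (measurableSet_singleton x)).inter (hZ (measurableSet_singleton 0))
  have hmC : ∀ c : Fin 2, MeasurableSet (C ⁻¹' {c}) := fun c => hC (measurableSet_singleton c)
  have hmSC : ∀ c : Fin 2, MeasurableSet (S ∩ C ⁻¹' {c}) := fun c => hmS.inter (hmC c)
  have hSposc : ∀ c : Fin 2, P (S ∩ C ⁻¹' {c}) ≠ 0 := fun c => (hpos c).ne'
  have hSpos : P S ≠ 0 := fun h => hSposc 0 (le_antisymm (h ▸ measure_mono Set.inter_subset_left) bot_le)
  set μ := P[|S] with hμ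
  -- μ (A ∩ C⁻¹{c}) = μ (C⁻¹{c}) * P[|S ∩ C⁻¹{c}] A
  have key : ∀ (c : Fin 2) (A : Set Ω), μ (A ∩ C ⁻¹' {c}) = μ (C ⁻¹' {c}) * (P[|S ∩ C ⁻¹' {c}]) A := by
    intro c A
    rw [hμ, cond_apply hmS, cond_apply hmS, cond_apply (hmSC c)]
    have h1 : S ∩ (A ∩ C ⁻¹' {c}) = S ∩ C ⁻¹' {c} ∩ A := by
      ext ω; simp [Set.mem_inter_iff]; tauto
    rw [h1]
    rw [mul_assoc ((P S)⁻¹), ← mul_assoc (P (S ∩ C ⁻¹' {c})), ENNReal.mul_inv_cancel (hSposc c) (measure_ne_top P _), one_mul]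
  have hCpos : ∀ c : Fin 2, μ (C ⁻¹' {c}) ≠ 0 := by
    intro c
    rw [hμ, cond_apply hmS]
    exact mul_ne_zero (ENNReal.inv_ne_zero.2 (measure_ne_top P S)) (hSposc c)
  rw [indepFun_iff_measure_inter_preimage_eq_mul]
  intro s t hs ht
  set A := R ⁻¹' s with hA
  set B := Y ⁻¹' t with hB
  -- ν_c B = μ B
  have hνB : ∀ c : Fin 2, (P[|S ∩ C ⁻¹' {c}]) B = μ B := by
    intro c
    have hPIc := hPI.measure_inter_preimage_eq_mul {c} t (measurableSet_singleton c) ht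
    have h2 := key c B
    rw [Set.inter_comm B (C ⁻¹' {c})] at h2
    rw [hPIc] at h2
    exact (ENNReal.mul_right_inj (hCpos c) (measure_ne_top _ _)).1 h2.symm
  -- partition over c
  have htwo : ∀ a : Fin 2, a = 0 ∨ a = 1 := by decide
  have hpart : ∀ (E : Set Ω), MeasurableSet E → μ E = μ (E ∩ C ⁻¹' {0}) + μ (E ∩ C ⁻¹' {1}) := by
    intro E hE
    have hunion : (E ∩ C ⁻¹' {0}) ∪ (E ∩ C ⁻¹' {1}) = E := by
      ext ω
      simp only [Set.mem_union, Set.mem_inter_iff, Set.mem_preimage, Set.mem_singleton_iff]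
      constructor
      · tauto
      · intro h; rcases htwo (C ω) with h' | h' <;> tauto
    have hdisj : Disjoint (E ∩ C ⁻¹' {0}) (E ∩ C ⁻¹' {1}) := by
      apply Set.disjoint_left.2
      rintro ω ⟨_, h0⟩ ⟨_, h1⟩
      simp only [Set.mem_preimage, Set.mem_singleton_iff] at h0 h1
      rw [h0] at h1; exact absurd h1 (by decide)
    conv_lhs => rw [← hunion]
    rw [measure_union hdisj (hE.inter (hmC 1))]
  have hmA : MeasurableSet A := hR hs
  have hmB : MeasurableSet B := hYm ht
  have hstep : ∀ c : Fin 2, μ ((A ∩ B) ∩ C ⁻¹' {c}) = μ (A ∩ C ⁻¹' {c}) * μ B := by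
    intro c
    rw [key c (A ∩ B), (hLMAR c).measure_inter_preimage_eq_mul s t hs ht, hνB c, key c A]
    ring
  calc μ (A ∩ B) = μ ((A ∩ B) ∩ C ⁻¹' {0}) + μ ((A ∩ B) ∩ C ⁻¹' {1}) :=
        hpart (A ∩ B) (hmA.inter hmB)
    _ = μ (A ∩ C ⁻¹' {0}) * μ B + μ (A ∩ C ⁻¹' {1}) * μ B := by rw [hstep 0, hstep 1]
    _ = (μ (A ∩ C ⁻¹' {0}) + μ (A ∩ C ⁻¹' {1})) * μ B := by ring
    _ = μ A * μ B := by rw [← hpart A hmA]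
end

section
/- Let π₁, λ₀ ∈ [0,1] and ϱ > 0, and set γ := (π₁ + λ₀)(ϱ − 1) + 1 and d := γ² − 4·π₁·λ₀·ϱ·(ϱ − 1). Then d = ((λ₀ − π₁)(ϱ − 1) − 1)² + 4(1 − π₁)·λ₀·(ϱ − 1), and d ≥ 0. -/
/-- The discriminant `d := γ² − 4·π₁·lam₀·ϱ·(ϱ − 1)` of the quadratic arising from the
proportional response odds assumption, where `γ := (π₁ + lam₀)(ϱ − 1) + 1`, admits the
alternative expression `((lam₀ − π₁)(ϱ − 1) − 1)² + 4(1 − π₁)·lam₀·(ϱ − 1)` and is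
nonnegative, for `π₁, lam₀ ∈ [0,1]` and `ϱ > 0`. (`lam₀` is written for `λ₀`.) -/
theorem stmt10 (π₁ lam₀ ϱ : ℝ)
    (hπ₁ : 0 ≤ π₁) (hπ₁' : π₁ ≤ 1)
    (hlam₀ : 0 ≤ lam₀) (hlam₀' : lam₀ ≤ 1)
    (hϱ : 0 < ϱ)
    (γ d : ℝ)
    (hγ : γ = (π₁ + lam₀) * (ϱ - 1) + 1)
    (hd : d = γ ^ 2 - 4 * π₁ * lam₀ * ϱ * (ϱ - 1)) :
    d = ((lam₀ - π₁) * (ϱ - 1) - 1) ^ 2 + 4 * (1 - π₁) * lam₀ * (ϱ - 1) ∧ 0 ≤ d := by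
  subst hγ hd
  constructor
  · ring
  · rcases le_or_gt ϱ 1 with h | h
    · nlinarith [sq_nonneg ((π₁ + lam₀) * (ϱ - 1) + 1), mul_nonneg (mul_nonneg (mul_nonneg hπ₁ hlam₀) hϱ.le) (sub_nonneg.2 h)]
    · nlinarith [sq_nonneg ((lam₀ - π₁) * (ϱ - 1) - 1), mul_nonneg hlam₀ (sub_nonneg.2 h.le),
        mul_nonneg (sub_nonneg.2 hπ₁') hlam₀]
end

section
/- Let π₁ ∈ (0,1), λ₀ ∈ (0,1), ϱ > 0 with ϱ ≠ 1, and set γ := (π₁ + λ₀)(ϱ − 1) + 1 and d := γ² − 4·π₁·λ₀·ϱ·(ϱ − 1). Suppose u, v ∈ [0,1] satisfy π₁·u + (1 − π₁)·v = λ₀ and u·(1 − v) = ϱ·v·(1 − u). Then u = (γ − √d) / (2·π₁·(ϱ − 1)) and v = ((λ₀ − π₁)(ϱ − 1) − 1 + √d) / (2·(1 − π₁)·(ϱ − 1)). -/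
/-- Uniqueness of the solution of the response mixture equation combined with the
proportional response odds assumption: if `u, v ∈ [0,1]` satisfy
`π₁·u + (1 − π₁)·v = lam₀` and `u(1 − v) = ϱ·v(1 − u)`, then `u` and `v` are given by the
closed-form expressions involving `γ := (π₁ + lam₀)(ϱ − 1) + 1` and
`d := γ² − 4·π₁·lam₀·ϱ·(ϱ − 1)`. (`lam₀` is written for `λ₀`.) -/
theorem stmt11 (π₁ lam₀ ϱ : ℝ)
    (hπ₁ : 0 < π₁) (hπ₁' : π₁ < 1)
    (hlam₀ : 0 < lam₀) (hlam₀' : lam₀ < 1)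
    (hϱ : 0 < ϱ) (hϱ' : ϱ ≠ 1)
    (γ d : ℝ)
    (hγ : γ = (π₁ + lam₀) * (ϱ - 1) + 1)
    (hd : d = γ ^ 2 - 4 * π₁ * lam₀ * ϱ * (ϱ - 1))
    (u v : ℝ) (hu : 0 ≤ u) (hu' : u ≤ 1) (hv : 0 ≤ v) (hv' : v ≤ 1)
    (hmix : π₁ * u + (1 - π₁) * v = lam₀)
    (hodds : u * (1 - v) = ϱ * (v * (1 - u))) :
    u = (γ - Real.sqrt d) / (2 * π₁ * (ϱ - 1)) ∧
    v = ((lam₀ - π₁) * (ϱ - 1) - 1 + Real.sqrt d) / (2 * (1 - π₁) * (ϱ - 1)) := by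
  have hπn : (0:ℝ) < 1 - π₁ := by linarith
  set a : ℝ := π₁ * (ϱ - 1) with ha
  have hr1 : ϱ - 1 ≠ 0 := sub_ne_zero.mpr hϱ'
  have ha0 : a ≠ 0 := mul_ne_zero (ne_of_gt hπ₁) hr1
  have hv2 : (1 - π₁) * v = lam₀ - π₁ * u := by linarith
  -- the quadratic satisfied by u
  have hquad : a * u ^ 2 - γ * u + ϱ * lam₀ = 0 := by
    rw [ha, hγ]
    linear_combination (π₁ - 1) * hodds - (ϱ * (1 - u) + u) * hv2
  -- discriminant identity
  have hkey : (γ - 2 * a * u) ^ 2 = d := by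
    rw [hd]
    linear_combination (4 * a) * hquad
  -- sign of γ - 2 a u
  have hsign : 0 ≤ γ - 2 * a * u := by
    by_contra hneg
    push_neg at hneg
    rcases lt_or_gt_of_ne hϱ' with h | h
    · -- ϱ < 1, a < 0 : compare with f(0) = ϱ lam₀ > 0
      have haneg : a < 0 := mul_neg_of_pos_of_neg hπ₁ (by linarith)
      nlinarith [mul_pos hϱ hlam₀,
        mul_nonneg hu (by linarith : (0:ℝ) ≤ 2 * a * u - γ),
        mul_nonneg (mul_nonneg hu hu) (by linarith : (0:ℝ) ≤ -a)]
    · -- ϱ > 1, a > 0 : compare with f(1) = lam₀ - 1 < 0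
      have hapos : 0 < a := mul_pos hπ₁ (by linarith)
      have hf1 : a - γ + ϱ * lam₀ = lam₀ - 1 := by rw [ha, hγ]; ring
      nlinarith [hf1, hquad,
        mul_nonneg (sub_nonneg.mpr hu') (show 0 ≤ a * (1 + u) - γ by
          nlinarith [mul_nonneg hapos.le (sub_nonneg.mpr hu')])]
  have hsqrt : Real.sqrt d = γ - 2 * a * u := by
    rw [← hkey, Real.sqrt_sq hsign]
  constructor
  · rw [hsqrt, eq_div_iff (mul_ne_zero (mul_ne_zero two_ne_zero (ne_of_gt hπ₁)) hr1)]
    rw [ha]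
    ring
  · rw [hsqrt, eq_div_iff (mul_ne_zero (mul_ne_zero two_ne_zero (ne_of_gt hπn)) hr1)]
    rw [ha, hγ]
    linear_combination (2 * (ϱ - 1)) * hmix
end

section
/- Let π₁ ∈ (0,1), λ₀ ∈ (0,1), ϱ > 0 with ϱ ≠ 1, and set γ := (π₁ + λ₀)(ϱ − 1) + 1 and d := γ² − 4·π₁·λ₀·ϱ·(ϱ − 1). Define u := (γ − √d) / (2·π₁·(ϱ − 1)) and v := (λ₀ − π₁·u)/(1 − π₁). Then u ∈ [0,1], v ∈ [0,1], π₁·u + (1 − π₁)·v = λ₀, and u·(1 − v) = ϱ·v·(1 − u). -/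
set_option maxHeartbeats 2000000


/-- Existence: the closed-form candidates `u := (γ − √d)/(2π₁(ϱ − 1))` and
`v := (lam₀ − π₁·u)/(1 − π₁)` are proper probabilities in `[0,1]` and solve both the
response mixture equation `π₁·u + (1 − π₁)·v = lam₀` and the proportional response odds
equation `u(1 − v) = ϱ·v(1 − u)`, where `γ := (π₁ + lam₀)(ϱ − 1) + 1` and
`d := γ² − 4·π₁·lam₀·ϱ·(ϱ − 1)`. (`lam₀` is written for `λ₀`.) -/
theorem stmt12 (π₁ lam₀ ϱ : ℝ)
    (hπ₁ : 0 < π₁) (hπ₁' : π₁ < 1)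
    (hlam₀ : 0 < lam₀) (hlam₀' : lam₀ < 1)
    (hϱ : 0 < ϱ) (hϱ' : ϱ ≠ 1)
    (γ d u v : ℝ)
    (hγ : γ = (π₁ + lam₀) * (ϱ - 1) + 1)
    (hd : d = γ ^ 2 - 4 * π₁ * lam₀ * ϱ * (ϱ - 1))
    (hu : u = (γ - Real.sqrt d) / (2 * π₁ * (ϱ - 1)))
    (hv : v = (lam₀ - π₁ * u) / (1 - π₁)) :
    u ∈ Set.Icc (0 : ℝ) 1 ∧ v ∈ Set.Icc (0 : ℝ) 1 ∧
    π₁ * u + (1 - π₁) * v = lam₀ ∧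
    u * (1 - v) = ϱ * (v * (1 - u)) := by
  have he : ϱ - 1 ≠ 0 := sub_ne_zero.mpr hϱ'
  have hπne : (1:ℝ) - π₁ ≠ 0 := by intro h; linarith
  have hane : π₁ * (ϱ - 1) ≠ 0 := mul_ne_zero (ne_of_gt hπ₁) he
  have hden : 2 * π₁ * (ϱ - 1) ≠ 0 := by
    rw [mul_assoc]; exact mul_ne_zero two_ne_zero hane
  set s := Real.sqrt d with hs
  have key : d = ((π₁ - lam₀) * (ϱ - 1) + 1) ^ 2 + 4 * lam₀ * (1 - π₁) * (ϱ - 1) := by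
    rw [hd, hγ]; ring
  have hdnn : 0 ≤ d := by
    rcases lt_or_gt_of_ne hϱ' with h | h
    · nlinarith [sq_nonneg γ,
        mul_pos (mul_pos (mul_pos hπ₁ hlam₀) hϱ) (show (0:ℝ) < 1 - ϱ by linarith)]
    · nlinarith [sq_nonneg ((π₁ - lam₀) * (ϱ - 1) + 1),
        mul_pos (mul_pos hlam₀ (show (0:ℝ) < 1 - π₁ by linarith)) (show (0:ℝ) < ϱ - 1 by linarith)]
  have hs2 : s ^ 2 = d := Real.sq_sqrt hdnn
  have hs0 : 0 ≤ s := Real.sqrt_nonneg d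
  have hu' : 2 * π₁ * (ϱ - 1) * u = γ - s := by
    rw [hu]; field_simp
  have hquad : π₁ * (ϱ - 1) * u ^ 2 - γ * u + ϱ * lam₀ = 0 := by
    have h4 : 4 * (π₁ * (ϱ - 1)) * (π₁ * (ϱ - 1) * u ^ 2 - γ * u + ϱ * lam₀) = 0 := by
      linear_combination (2 * π₁ * (ϱ - 1) * u - γ - s) * hu' + hs2 + hd
    exact (mul_eq_zero.mp h4).resolve_left (mul_ne_zero four_ne_zero hane)
  clear_value s
  have hu01 : 0 < u ∧ u < 1 := by
    clear hu hv hs key hquad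
    rcases lt_or_gt_of_ne hϱ' with h | h
    · have ha : π₁ * (ϱ - 1) < 0 := mul_neg_of_pos_of_neg hπ₁ (by linarith)
      have hdg : γ ^ 2 < s ^ 2 := by
        nlinarith [mul_pos (mul_pos (mul_pos hπ₁ hlam₀) hϱ) (show (0:ℝ) < 1 - ϱ by linarith)]
      have hsγ : γ < s := by nlinarith
      have hupos : 0 < u := by nlinarith
      have hg2 : 0 < γ - 2 * (π₁ * (ϱ - 1)) := by
        nlinarith [mul_pos (show (0:ℝ) < 1 - lam₀ + π₁ by linarith) (show (0:ℝ) < 2 - ϱ by linarith),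
          mul_pos (show (0:ℝ) < 1 + lam₀ - π₁ by linarith) hϱ]
      have hsq : s ^ 2 < (γ - 2 * (π₁ * (ϱ - 1))) ^ 2 := by
        have h1 : (γ - 2 * (π₁ * (ϱ - 1))) ^ 2 - s ^ 2 = 4 * π₁ * ((ϱ - 1) * (lam₀ - 1)) := by
          linear_combination (-1 : ℝ) * hs2 - hd - 4 * π₁ * (ϱ - 1) * hγ
        nlinarith [mul_pos (show (0:ℝ) < 1 - ϱ by linarith) (show (0:ℝ) < 1 - lam₀ by linarith)]
      have hslt : s < γ - 2 * (π₁ * (ϱ - 1)) := by nlinarith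
      have : u < 1 := by nlinarith
      exact ⟨hupos, this⟩
    · have ha : 0 < π₁ * (ϱ - 1) := mul_pos hπ₁ (by linarith)
      have hγpos : 0 < γ := by
        rw [hγ]; nlinarith [mul_pos (show (0:ℝ) < π₁ + lam₀ by linarith) (show (0:ℝ) < ϱ - 1 by linarith)]
      have hdg : s ^ 2 < γ ^ 2 := by
        nlinarith [mul_pos (mul_pos (mul_pos hπ₁ hlam₀) hϱ) (show (0:ℝ) < ϱ - 1 by linarith)]
      have hsγ : s < γ := by nlinarith
      have hupos : 0 < u := by nlinarith
      have hsq : (γ - 2 * (π₁ * (ϱ - 1))) ^ 2 < s ^ 2 := by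
        have h1 : s ^ 2 - (γ - 2 * (π₁ * (ϱ - 1))) ^ 2 = 4 * π₁ * ((ϱ - 1) * (1 - lam₀)) := by
          linear_combination hs2 + hd + 4 * π₁ * (ϱ - 1) * hγ
        nlinarith [mul_pos (show (0:ℝ) < ϱ - 1 by linarith) (show (0:ℝ) < 1 - lam₀ by linarith)]
      have hslt : γ - 2 * (π₁ * (ϱ - 1)) < s := lt_of_pow_lt_pow_left₀ 2 hs0 hsq
      have : u < 1 := by
        have h2 : 2 * π₁ * (ϱ - 1) * u < 2 * π₁ * (ϱ - 1) * 1 := by rw [mul_one]; linarith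
        exact lt_of_mul_lt_mul_left h2 (by linarith)
      exact ⟨hupos, this⟩
  obtain ⟨hu0, hu1⟩ := hu01
  have hmix : π₁ * u + (1 - π₁) * v = lam₀ := by
    rw [hv]; field_simp; ring
  have hodds : u * (1 - v) = ϱ * (v * (1 - u)) := by
    rw [hv]
    field_simp
    linear_combination -hquad - u * hγ
  clear hquad hu' hs2 hs0 hs hu hd key hγ hdnn
  clear s d
  have hvden : 0 < u + ϱ * (1 - u) := by nlinarith [mul_pos hϱ (show (0:ℝ) < 1 - u by linarith)]
  have hveq : v * (u + ϱ * (1 - u)) = u := by linear_combination -hodds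
  have hv0 : 0 ≤ v := by nlinarith
  have hv1 : v ≤ 1 := by nlinarith [mul_pos hϱ (show (0:ℝ) < 1 - u by linarith)]
  exact ⟨⟨le_of_lt hu0, le_of_lt hu1⟩, ⟨hv0, hv1⟩, hmix, hodds⟩
end

section
/- Let X : Ω → 𝒳 have countable range, Z, C, R : Ω → {0,1}, and Y an integrable real random variable. Fix x ∈ 𝒳 and assume: P({X=x} ∩ {Z=z} ∩ {C=c}) > 0 for all z, c ∈ {0,1}; P({X=x} ∩ {Z=0} ∩ {R=1}) > 0; P(C=c | {X=x} ∩ {Z=0}) = P(C=c | {X=x} ∩ {Z=1}) =: π_c for both c; under P(· | {X=x} ∩ {Z=0} ∩ {C=c}) the random variables R and Y are independent for both c (latent missing at random); P(R=1 | {X=x} ∩ {Z=0} ∩ {C=0}) = P(R=1 | {X=x} ∩ {Z=1} ∩ {C=0}) =: ϖ₁₀ (stable noncomplier response); and E[Y | {X=x} ∩ {Z=0} ∩ {C=0}] = E[Y | {X=x} ∩ {Z=1} ∩ {C=0}] =: μ₁₀ (exclusion restriction). Let λ₀ := P(R=1 | {X=x} ∩ {Z=0}) and κ := E[Y | {X=x}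 ∩ {Z=0} ∩ {R=1}], and assume λ₀ − π₀·ϖ₁₀ > 0. Then E[Y | {X=x} ∩ {Z=0} ∩ {C=1}] = (λ₀·κ − π₀·ϖ₁₀·μ₁₀) / (λ₀ − π₀·ϖ₁₀). -/
open MeasureTheory ProbabilityTheory
open scoped Classical

/-- Under conditional independence of `R` and `Y` given `B`, the integral of `Y` over
`B ∩ {R = 1}` factors as `P(R=1 | B)` times the integral of `Y` over `B`. -/
lemma lmar_factor {Ω : Type*} [MeasurableSpace Ω] (P : Measure Ω) [IsProbabilityMeasure P]
    (R : Ω → Fin 2) (Y : Ω → ℝ) (hR : Measurable R) (hYm : Measurable Y)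
    (B : Set Ω) (hB : MeasurableSet B) (hPB : P B ≠ 0)
    (hInd : IndepFun R Y (P[|B])) :
    ∫ ω in B ∩ R ⁻¹' {1}, Y ω ∂P = cPr P (R ⁻¹' {1}) B * ∫ ω in B, Y ω ∂P := by
  have hR1 : MeasurableSet (R ⁻¹' {1}) := hR (measurableSet_singleton 1)
  set g : Ω → ℝ := (R ⁻¹' {1}).indicator (fun _ => 1) with hg
  have hgm : Measurable g := measurable_const.indicator hR1
  have hInd2 : IndepFun g Y (P[|B]) := by
    have h := hInd.comp (φ := fun r : Fin 2 => if r = 1 then (1:ℝ) else 0) (ψ := id)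
      (measurable_of_countable _) measurable_id
    have : g = (fun r : Fin 2 => if r = 1 then (1:ℝ) else 0) ∘ R := by
      funext ω
      simp [hg, Set.indicator_apply]
    rwa [this]
  have key : ∫ ω, (g * Y) ω ∂(P[|B]) = (∫ ω, g ω ∂(P[|B])) * ∫ ω, Y ω ∂(P[|B]) :=
    hInd2.integral_mul_eq_mul_integral hgm.aestronglyMeasurable hYm.aestronglyMeasurable
  have hcond : P[|B] = (P B)⁻¹ • P.restrict B := rfl
  have hgY : (g * Y) = (R ⁻¹' {1}).indicator Y := by
    funext ω
    simp only [Pi.mul_apply, hg, Set.indicator_apply]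
    split <;> simp
  have hlhs : ∫ ω, (g * Y) ω ∂(P[|B])
      = (P B).toReal⁻¹ * ∫ ω in R ⁻¹' {1} ∩ B, Y ω ∂P := by
    rw [hgY, integral_indicator hR1, hcond]
    rw [Measure.restrict_smul, integral_smul_measure, Measure.restrict_restrict hR1,
      ENNReal.toReal_inv, smul_eq_mul]
  have hintg : ∫ ω, g ω ∂(P[|B]) = ((P B)⁻¹ * P (B ∩ R ⁻¹' {1})).toReal := by
    rw [hg, integral_indicator_const (1 : ℝ) hR1, smul_eq_mul, mul_one,
      measureReal_def, cond_apply hB]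
  have hintY : ∫ ω, Y ω ∂(P[|B]) = (P B).toReal⁻¹ * ∫ ω in B, Y ω ∂P := by
    rw [hcond, integral_smul_measure, ENNReal.toReal_inv, smul_eq_mul]
  rw [hlhs, hintg, hintY] at key
  have hpB : (P B).toReal ≠ 0 := ENNReal.toReal_ne_zero.2 ⟨hPB, measure_ne_top _ _⟩
  have hcomm : R ⁻¹' {1} ∩ B = B ∩ R ⁻¹' {1} := Set.inter_comm _ _
  rw [ENNReal.toReal_mul, ENNReal.toReal_inv, hcomm] at key
  have key2 : (P B).toReal⁻¹ * (∫ ω in B ∩ R ⁻¹' {1}, Y ω ∂P)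
      = (P B).toReal⁻¹ * ((P (B ∩ R ⁻¹' {1})).toReal * ((P B).toReal⁻¹ * ∫ ω in B, Y ω ∂P)) := by
    rw [key]; ring
  have key3 := mul_left_cancel₀ (inv_ne_zero hpB) key2
  rw [key3]
  unfold cPr
  rw [Set.inter_comm (R ⁻¹' {1}) B, div_eq_mul_inv]
  ring

/-- Identification of the complier outcome mean under control, combining treatment
assignment ignorability (stratum probabilities equal across arms), LMAR, stable
noncomplier response (SNR) and the exclusion restriction (ER):
`E[Y | {X=x} ∩ {Z=0} ∩ {C=1}] = (λ₀·κ − π₀·ϖ₁₀·μ₁₀)/(λ₀ − π₀·ϖ₁₀)`.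
Here `lam₀` is written for `λ₀` and `w₁₀` for `ϖ₁₀`. -/
theorem stmt13 {Ω 𝒳 : Type*} [MeasurableSpace Ω]
    [Countable 𝒳] [MeasurableSpace 𝒳] [MeasurableSingletonClass 𝒳]
    (P : Measure Ω) [IsProbabilityMeasure P]
    (X : Ω → 𝒳) (Z C R : Ω → Fin 2) (Y : Ω → ℝ)
    (hX : Measurable X) (hZ : Measurable Z) (hC : Measurable C) (hR : Measurable R)
    (hYm : Measurable Y) (hYint : Integrable Y P)
    (x : 𝒳)
    (hpos : ∀ z c : Fin 2, 0 < P (X ⁻¹' {x} ∩ Z ⁻¹' {z} ∩ C ⁻¹' {c}))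
    (hposR : 0 < P (X ⁻¹' {x} ∩ Z ⁻¹' {0} ∩ R ⁻¹' {1}))
    (hTA : ∀ c : Fin 2, cPr P (C ⁻¹' {c}) (X ⁻¹' {x} ∩ Z ⁻¹' {0})
        = cPr P (C ⁻¹' {c}) (X ⁻¹' {x} ∩ Z ⁻¹' {1}))
    (hLMAR : ∀ c : Fin 2, IndepFun R Y (P[|X ⁻¹' {x} ∩ Z ⁻¹' {0} ∩ C ⁻¹' {c}]))
    (hSNR : cPr P (R ⁻¹' {1}) (X ⁻¹' {x} ∩ Z ⁻¹' {0} ∩ C ⁻¹' {0})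
        = cPr P (R ⁻¹' {1}) (X ⁻¹' {x} ∩ Z ⁻¹' {1} ∩ C ⁻¹' {0}))
    (hER : cExp P Y (X ⁻¹' {x} ∩ Z ⁻¹' {0} ∩ C ⁻¹' {0})
        = cExp P Y (X ⁻¹' {x} ∩ Z ⁻¹' {1} ∩ C ⁻¹' {0}))
    (π₀ w₁₀ μ₁₀ lam₀ κ : ℝ)
    (hπ₀ : π₀ = cPr P (C ⁻¹' {0}) (X ⁻¹' {x} ∩ Z ⁻¹' {1}))
    (hw₁₀ : w₁₀ = cPr P (R ⁻¹' {1}) (X ⁻¹' {x} ∩ Z ⁻¹' {1} ∩ C ⁻¹' {0}))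
    (hμ₁₀ : μ₁₀ = cExp P Y (X ⁻¹' {x} ∩ Z ⁻¹' {1} ∩ C ⁻¹' {0}))
    (hlam₀ : lam₀ = cPr P (R ⁻¹' {1}) (X ⁻¹' {x} ∩ Z ⁻¹' {0}))
    (hκ : κ = cExp P Y (X ⁻¹' {x} ∩ Z ⁻¹' {0} ∩ R ⁻¹' {1}))
    (hden : 0 < lam₀ - π₀ * w₁₀) :
    cExp P Y (X ⁻¹' {x} ∩ Z ⁻¹' {0} ∩ C ⁻¹' {1})
      = (lam₀ * κ - π₀ * w₁₀ * μ₁₀) / (lam₀ - π₀ * w₁₀) := by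
  -- notation
  set A : Set Ω := X ⁻¹' {x} ∩ Z ⁻¹' {0} with hA
  have hAm : MeasurableSet A :=
    ((hX (measurableSet_singleton x)).inter (hZ (measurableSet_singleton 0)))
  have hC0 : MeasurableSet (C ⁻¹' {0}) := hC (measurableSet_singleton 0)
  have hC1 : MeasurableSet (C ⁻¹' {1}) := hC (measurableSet_singleton 1)
  have hR1 : MeasurableSet (R ⁻¹' {1}) := hR (measurableSet_singleton 1)
  set B0 : Set Ω := A ∩ C ⁻¹' {0} with hB0
  set B1 : Set Ω := A ∩ C ⁻¹' {1} with hB1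
  have hB0m : MeasurableSet B0 := hAm.inter hC0
  have hB1m : MeasurableSet B1 := hAm.inter hC1
  -- positivity
  have hPB0 : 0 < P B0 := hpos 0 0
  have hPB1 : 0 < P B1 := hpos 0 1
  have hPA : 0 < P A := lt_of_lt_of_le hPB0 (measure_mono Set.inter_subset_left)
  -- real versions
  set a : ℝ := (P A).toReal with ha
  set b0 : ℝ := (P B0).toReal with hb0
  set b1 : ℝ := (P B1).toReal with hb1
  have ha0 : 0 < a := ENNReal.toReal_pos hPA.ne' (measure_ne_top _ _)
  have hb00 : 0 < b0 := ENNReal.toReal_pos hPB0.ne' (measure_ne_top _ _)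
  have hb10 : 0 < b1 := ENNReal.toReal_pos hPB1.ne' (measure_ne_top _ _)
  have hnA0 : 0 < ((P (A ∩ R ⁻¹' {1})).toReal) :=
    ENNReal.toReal_pos hposR.ne' (measure_ne_top _ _)
  -- measure splitting
  have hmeas_split : ∀ S : Set Ω, MeasurableSet S →
      (P (S)).toReal = (P (S ∩ C ⁻¹' {0})).toReal + (P (S ∩ C ⁻¹' {1})).toReal := by
    intro S hS
    have hd : Disjoint (S ∩ C ⁻¹' {0}) (S ∩ C ⁻¹' {1}) := by
      apply Set.disjoint_left.mpr
      rintro ω ⟨_, h0⟩ ⟨_, h1⟩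
      simp only [Set.mem_preimage, Set.mem_singleton_iff] at h0 h1
      rw [h0] at h1; exact absurd h1 (by decide)
    have hu : S = (S ∩ C ⁻¹' {0}) ∪ (S ∩ C ⁻¹' {1}) := by
      ext ω
      constructor
      · intro hω
        match h : C ω with
        | 0 => exact Or.inl ⟨hω, by simp [Set.mem_preimage, h]⟩
        | 1 => exact Or.inr ⟨hω, by simp [Set.mem_preimage, h]⟩
      · rintro (⟨h, _⟩ | ⟨h, _⟩) <;> exact h
    conv_lhs => rw [hu]
    rw [measure_union hd (hS.inter hC1),
      ENNReal.toReal_add (measure_ne_top _ _) (measure_ne_top _ _)]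
  -- integral splitting
  have hint_split : ∀ S : Set Ω, MeasurableSet S →
      ∫ ω in S, Y ω ∂P = (∫ ω in S ∩ C ⁻¹' {0}, Y ω ∂P) + ∫ ω in S ∩ C ⁻¹' {1}, Y ω ∂P := by
    intro S hS
    have hd : Disjoint (S ∩ C ⁻¹' {0}) (S ∩ C ⁻¹' {1}) := by
      apply Set.disjoint_left.mpr
      rintro ω ⟨_, h0⟩ ⟨_, h1⟩
      simp only [Set.mem_preimage, Set.mem_singleton_iff] at h0 h1
      rw [h0] at h1; exact absurd h1 (by decide)
    have hu : S = (S ∩ C ⁻¹' {0}) ∪ (S ∩ C ⁻¹' {1}) := by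
      ext ω
      constructor
      · intro hω
        match h : C ω with
        | 0 => exact Or.inl ⟨hω, by simp [Set.mem_preimage, h]⟩
        | 1 => exact Or.inr ⟨hω, by simp [Set.mem_preimage, h]⟩
      · rintro (⟨h, _⟩ | ⟨h, _⟩) <;> exact h
    conv_lhs => rw [hu]
    exact setIntegral_union hd (hS.inter hC1) hYint.integrableOn hYint.integrableOn
  -- LMAR factorization on each stratum
  have hfac0 : ∫ ω in B0 ∩ R ⁻¹' {1}, Y ω ∂P
      = cPr P (R ⁻¹' {1}) B0 * ∫ ω in B0, Y ω ∂P :=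
    lmar_factor P R Y hR hYm B0 hB0m hPB0.ne' (hLMAR 0)
  have hfac1 : ∫ ω in B1 ∩ R ⁻¹' {1}, Y ω ∂P
      = cPr P (R ⁻¹' {1}) B1 * ∫ ω in B1, Y ω ∂P :=
    lmar_factor P R Y hR hYm B1 hB1m hPB1.ne' (hLMAR 1)
  -- abbreviations for real quantities
  set I0 : ℝ := ∫ ω in B0, Y ω ∂P with hI0
  set I1 : ℝ := ∫ ω in B1, Y ω ∂P with hI1
  set n0 : ℝ := (P (B0 ∩ R ⁻¹' {1})).toReal with hn0
  set n1 : ℝ := (P (B1 ∩ R ⁻¹' {1})).toReal with hn1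
  set nA : ℝ := (P (A ∩ R ⁻¹' {1})).toReal with hnA
  -- splits of A ∩ R⁻¹{1}
  have hswap0 : A ∩ R ⁻¹' {1} ∩ C ⁻¹' {0} = B0 ∩ R ⁻¹' {1} := by
    rw [hB0]; rw [Set.inter_right_comm]
  have hswap1 : A ∩ R ⁻¹' {1} ∩ C ⁻¹' {1} = B1 ∩ R ⁻¹' {1} := by
    rw [hB1]; rw [Set.inter_right_comm]
  have hnsplit : nA = n0 + n1 := by
    rw [hnA, hmeas_split _ (hAm.inter hR1), hswap0, hswap1]
  have hJsplit : ∫ ω in A ∩ R ⁻¹' {1}, Y ω ∂P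
      = (∫ ω in B0 ∩ R ⁻¹' {1}, Y ω ∂P) + ∫ ω in B1 ∩ R ⁻¹' {1}, Y ω ∂P := by
    rw [hint_split _ (hAm.inter hR1), hswap0, hswap1]
  -- express structural parameters in z = 0 stratum
  have hπ₀' : π₀ = b0 / a := by
    rw [hπ₀, ← hTA 0]
    unfold cPr
    rw [Set.inter_comm, ← hb0, ← ha]
  have hw₁₀' : w₁₀ = n0 / b0 := by
    rw [hw₁₀, ← hSNR]
    unfold cPr
    rw [Set.inter_comm, ← hn0, ← hb0]
  have hμ₁₀' : μ₁₀ = I0 / b0 := by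
    rw [hμ₁₀, ← hER]
    unfold cExp
    rw [← hI0, ← hb0]
  have hlam₀' : lam₀ = nA / a := by
    rw [hlam₀]
    unfold cPr
    rw [Set.inter_comm, ← hnA, ← ha]
  have hκ' : κ = ((n0 / b0) * I0 + (n1 / b1) * I1) / nA := by
    rw [hκ]
    unfold cExp
    rw [hJsplit]
    rw [hfac0, hfac1, ← hnA]
    unfold cPr
    rw [Set.inter_comm (R ⁻¹' {1}) B0, Set.inter_comm (R ⁻¹' {1}) B1,
      ← hn0, ← hn1, ← hb0, ← hb1]
  -- goal is I1 / b1 = ...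
  have hgoal : cExp P Y B1 = I1 / b1 := by
    unfold cExp
    rw [← hI1, ← hb1]
  rw [hgoal]
  -- denominator identity
  have hdenom : lam₀ - π₀ * w₁₀ = n1 / a := by
    rw [hlam₀', hπ₀', hw₁₀', hnsplit]
    field_simp
    ring
  have hn1pos : 0 < n1 := by
    have h := hden
    rw [hdenom] at h
    rcases div_pos_iff.mp h with ⟨h1, _⟩ | ⟨_, h2⟩
    · exact h1
    · linarith
  have hnAne : nA ≠ 0 := hnA0.ne'
  rw [hdenom, hlam₀', hπ₀', hw₁₀', hμ₁₀', hκ', hnsplit]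
  have hnn : n0 + n1 ≠ 0 := by rw [← hnsplit]; exact hnAne
  field_simp
  ring
end

section
/- Let p ∈ [0,1], η ∈ ℝ, σ ≥ 0, ς ≥ 0, and μ₁, μ₀, κ real numbers satisfying: μ₁ − μ₀ = η·σ, p·μ₁ + (1 − p)·μ₀ = κ, and ς² = σ² + p·(1 − p)·(μ₁ − μ₀)². Then μ₁ = κ + η·(1 − p)·ς / √(1 + η²·p·(1 − p)) and μ₀ = κ − η·p·ς / √(1 + η²·p·(1 − p)). -/
/-- Solving the outcome mixture equation under the standardized-mean-difference
sensitivity assumption with equal component variances (PIsens-SMDe): if `μ₁ − μ₀ = η·σ`,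
`p·μ₁ + (1 − p)·μ₀ = κ`, and `ς² = σ² + p(1 − p)(μ₁ − μ₀)²` (mixture variance
decomposition), then `μ₁ = κ + η(1 − p)·ς/√(1 + η²p(1 − p))` and
`μ₀ = κ − η·p·ς/√(1 + η²p(1 − p))`. (`ς` is written `ζ`.) -/
theorem stmt15 (p η σ ζ μ₁ μ₀ κ : ℝ)
    (hp : 0 ≤ p) (hp' : p ≤ 1)
    (hσ : 0 ≤ σ) (hζ : 0 ≤ ζ)
    (hSMD : μ₁ - μ₀ = η * σ)
    (hmix : p * μ₁ + (1 - p) * μ₀ = κ)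
    (hvar : ζ ^ 2 = σ ^ 2 + p * (1 - p) * (μ₁ - μ₀) ^ 2) :
    μ₁ = κ + η * (1 - p) * ζ / Real.sqrt (1 + η ^ 2 * p * (1 - p)) ∧
    μ₀ = κ - η * p * ζ / Real.sqrt (1 + η ^ 2 * p * (1 - p)) := by
  have hA : (0:ℝ) < 1 + η ^ 2 * p * (1 - p) := by
    nlinarith [mul_nonneg (mul_nonneg (sq_nonneg η) hp) (sub_nonneg.mpr hp')]
  set s := Real.sqrt (1 + η ^ 2 * p * (1 - p)) with hs_def
  have hs0 : 0 < s := Real.sqrt_pos.mpr hA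
  have hs2 : s ^ 2 = 1 + η ^ 2 * p * (1 - p) := Real.sq_sqrt hA.le
  have h2 : 0 ≤ σ * s := mul_nonneg hσ hs0.le
  have h1 : ζ ^ 2 = (σ * s) ^ 2 := by
    rw [mul_pow, hs2]
    linear_combination hvar + p * (1 - p) * (μ₁ - μ₀ + η * σ) * hSMD
  have hζσ : ζ = σ * s := by nlinarith [h1, h2, hζ, sq_nonneg (ζ - σ * s), sq_nonneg (ζ + σ * s)]
  have h3 : μ₁ = κ + η * (1 - p) * σ := by linear_combination hmix + (1 - p) * hSMD
  have h4 : μ₀ = κ - η * p * σ := by linear_combination hmix - p * hSMD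
  constructor
  · rw [hζσ]; field_simp; linear_combination h3
  · rw [hζσ]; field_simp; linear_combination h4
end

section
/- Let l < h be real numbers, p ∈ (0,1), κ ∈ (l,h), and ψ > 0 with ψ ≠ 1. Set k := (κ − l)/(h − l), α := (p + k)(ψ − 1) + 1, and β := √(α² − 4·p·k·ψ·(ψ − 1)). Suppose μ₁, μ₀ ∈ [l,h] satisfy p·μ₁ + (1 − p)·μ₀ = κ and (μ₁ − l)·(h − μ₀) = ψ·(μ₀ − l)·(h − μ₁). Then μ₁ = ((α − β)/(2·(ψ − 1)·p))·(h − l) + l and μ₀ = (κ − p·μ₁)/(1 − p). -/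
private lemma stmt16_aux1 (A c a R : ℝ) (ha : 0 < a) (hc : c < 0) (hR : 0 < R)
    (hq : a * (A - c * a) = R) : 0 ≤ A - 2 * (c * a) := by
  have h0 : 0 < a * (A - c * a) := by rw [hq]; exact hR
  have hf : 0 < A - c * a := by
    rcases mul_pos_iff.mp h0 with ⟨_, h2⟩ | ⟨h1, _⟩
    · exact h2
    · linarith
  have hca : c * a < 0 := mul_neg_of_neg_of_pos hc ha
  nlinarith [hf, hca]

private lemma stmt16_aux2 (A c a H R : ℝ) (ha : 0 < a) (haH : a < H) (hc : 0 < c)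
    (hR : 0 < R) (hq : (H - a) * (A - c * (a + H)) = R) : 0 ≤ A - 2 * (c * a) := by
  have h0 : 0 < (H - a) * (A - c * (a + H)) := by rw [hq]; exact hR
  have hf : 0 < A - c * (a + H) := by
    rcases mul_pos_iff.mp h0 with ⟨_, h2⟩ | ⟨h1, _⟩
    · exact h2
    · linarith
  have h1 : 0 < c * (H - a) := mul_pos hc (by linarith)
  nlinarith [hf, h1]

/-- Solving the outcome mixture equation under the generalized-odds-ratio sensitivity
assumption (PIsens-GOR) for an outcome bounded in `[l,h]`: if `μ₁, μ₀ ∈ [l,h]` satisfy the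
mixture equation `p·μ₁ + (1 − p)·μ₀ = κ` and the GOR equation
`(μ₁ − l)(h − μ₀) = ψ(μ₀ − l)(h − μ₁)`, then with `k := (κ − l)/(h − l)`,
`α := (p + k)(ψ − 1) + 1` and `β := √(α² − 4pkψ(ψ − 1))`, we have
`μ₁ = ((α − β)/(2(ψ − 1)p))(h − l) + l` and `μ₀ = (κ − p·μ₁)/(1 − p)`. -/
theorem stmt16 (l h p κ ψ : ℝ)
    (hlh : l < h) (hp : 0 < p) (hp' : p < 1)
    (hκ : l < κ) (hκ' : κ < h)
    (hψ : 0 < ψ) (hψ' : ψ ≠ 1)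
    (k α β μ₁ μ₀ : ℝ)
    (hk : k = (κ - l) / (h - l))
    (hα : α = (p + k) * (ψ - 1) + 1)
    (hβ : β = Real.sqrt (α ^ 2 - 4 * p * k * ψ * (ψ - 1)))
    (hμ₁mem : μ₁ ∈ Set.Icc l h) (hμ₀mem : μ₀ ∈ Set.Icc l h)
    (hmix : p * μ₁ + (1 - p) * μ₀ = κ)
    (hGOR : (μ₁ - l) * (h - μ₀) = ψ * ((μ₀ - l) * (h - μ₁))) :
    μ₁ = (α - β) / (2 * (ψ - 1) * p) * (h - l) + l ∧
    μ₀ = (κ - p * μ₁) / (1 - p) := by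
  have hH : (0:ℝ) < h - l := by linarith
  have hHne : h - l ≠ 0 := ne_of_gt hH
  have hψ1 : ψ - 1 ≠ 0 := sub_ne_zero.mpr hψ'
  have hk' : k * (h - l) = κ - l := by rw [hk]; field_simp
  have hA : α * (h - l) = (p * (h - l) + (κ - l)) * (ψ - 1) + (h - l) := by
    rw [hα]; linear_combination (ψ - 1) * hk'
  -- strict bounds on μ₁
  have h1l : l < μ₁ := by
    rcases eq_or_lt_of_le hμ₁mem.1 with he | h'
    · exfalso
      rw [← he] at hGOR hmix
      have h2 : μ₀ ≤ l := by nlinarith [mul_pos hψ hH]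
      have h3 : μ₀ = l := le_antisymm h2 hμ₀mem.1
      rw [h3] at hmix
      nlinarith [hmix]
    · exact h'
  have h1h : μ₁ < h := by
    rcases eq_or_lt_of_le hμ₁mem.2 with he | h'
    · exfalso
      rw [he] at hGOR hmix
      have h2 : h ≤ μ₀ := by nlinarith [hH]
      have h3 : μ₀ = h := le_antisymm hμ₀mem.2 h2
      rw [h3] at hmix
      nlinarith [hmix]
    · exact h'
  -- the quadratic equation satisfied by μ₁
  have key : (ψ - 1) * p * (μ₁ - l) ^ 2 - α * (h - l) * (μ₁ - l)
      + ψ * (κ - l) * (h - l) = 0 := by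
    linear_combination ((ψ - 1) * (μ₁ - l) - ψ * (h - l)) * hmix - (1 - p) * hGOR
      - (μ₁ - l) * hA
  -- root selection: 2(ψ-1)p(μ₁-l) ≤ α(h-l)
  have hupper : 0 ≤ α * (h - l) - 2 * ((ψ - 1) * p * (μ₁ - l)) := by
    rcases lt_or_gt_of_ne hψ' with hlt | hgt
    · have := stmt16_aux1 (α * (h - l)) ((ψ - 1) * p) (μ₁ - l)
        (ψ * (κ - l) * (h - l)) (by linarith)
        (mul_neg_of_neg_of_pos (by linarith) hp)
        (mul_pos (mul_pos hψ (by linarith)) hH)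
        (by linear_combination -key)
      linarith [this]
    · have := stmt16_aux2 (α * (h - l)) ((ψ - 1) * p) (μ₁ - l) (h - l)
        ((h - κ) * (h - l)) (by linarith) (by linarith)
        (mul_pos (by linarith) hp)
        (mul_pos (by linarith) hH)
        (by linear_combination key + (h - l) * hA)
      linarith [this]
  -- value of β
  have hdisc : (α ^ 2 - 4 * p * k * ψ * (ψ - 1)) * (h - l) ^ 2
      = (α * (h - l) - 2 * ((ψ - 1) * p * (μ₁ - l))) ^ 2 := by
    linear_combination -4 * (ψ - 1) * p * key - 4 * p * ψ * (ψ - 1) * (h - l) * hk'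
  have hβval : β * (h - l) = α * (h - l) - 2 * ((ψ - 1) * p * (μ₁ - l)) := by
    have h1 : α ^ 2 - 4 * p * k * ψ * (ψ - 1)
        = ((α * (h - l) - 2 * ((ψ - 1) * p * (μ₁ - l))) / (h - l)) ^ 2 := by
      rw [div_pow, eq_div_iff (by positivity)]
      linear_combination hdisc
    have h2 : (0:ℝ) ≤ (α * (h - l) - 2 * ((ψ - 1) * p * (μ₁ - l))) / (h - l) :=
      div_nonneg hupper hH.le
    rw [hβ, h1, Real.sqrt_sq h2]
    exact div_mul_cancel₀ _ hHne
  constructor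
  · have hmain : (μ₁ - l) * (2 * (ψ - 1) * p) = (α - β) * (h - l) := by
      linear_combination hβval
    have hd : (2 * (ψ - 1) * p) ≠ 0 := by
      exact mul_ne_zero (mul_ne_zero two_ne_zero hψ1) hp.ne'
    rw [eq_comm, div_mul_eq_mul_div, div_add' _ _ _ hd, div_eq_iff hd]
    linear_combination -hmain
  · rw [eq_div_iff (by linarith : (1:ℝ) - p ≠ 0)]
    linarith
end

section
/- Let X : Ω → 𝒳 have countable range and Z, C, R : Ω → {0,1}. Fix x ∈ 𝒳 and assume: P({X=x} ∩ {Z=1}) > 0; P({X=x} ∩ {Z=0} ∩ {C=c}) > 0 for both c ∈ {0,1}; P({X=x} ∩ {Z=0} ∩ {R=1}) > 0; P(C=c | {X=x} ∩ {Z=0}) = P(C=c | {X=x} ∩ {Z=1}) for both c; and P(R=1 | {X=x} ∩ {Z=0} ∩ {C=1}) = P(R=1 | {X=x} ∩ {Z=0} ∩ {C=0}) (response principal ignorability). Then for both c ∈ {0,1}: P(R=1 | {X=x} ∩ {Z=0} ∩ {C=c}) = P(R=1 | {X=x} ∩ {Z=0}) and P(C=c | {X=x} ∩ {Z=0} ∩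 {R=1}) = P(C=c | {X=x} ∩ {Z=1}). -/
open MeasureTheory ProbabilityTheory
open scoped Classical

/-- Under response principal ignorability (rPI) and equality of stratum probabilities
across arms, the stratum-specific response probabilities under control both equal the
overall control-arm response probability, and the mixture weights among control-arm
responders equal the treatment-arm stratum probabilities. -/
theorem stmt17 {Ω 𝒳 : Type*} [MeasurableSpace Ω]
    [Countable 𝒳] [MeasurableSpace 𝒳] [MeasurableSingletonClass 𝒳]
    (P : Measure Ω) [IsProbabilityMeasure P]
    (X : Ω → 𝒳) (Z C R : Ω → Fin 2)
    (hX : Measurable X) (hZ : Measurable Z) (hC : Measurable C) (hR : Measurable R)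
    (x : 𝒳)
    (h1 : 0 < P (X ⁻¹' {x} ∩ Z ⁻¹' {1}))
    (h2 : ∀ c : Fin 2, 0 < P (X ⁻¹' {x} ∩ Z ⁻¹' {0} ∩ C ⁻¹' {c}))
    (h3 : 0 < P (X ⁻¹' {x} ∩ Z ⁻¹' {0} ∩ R ⁻¹' {1}))
    (hTA : ∀ c : Fin 2, cPr P (C ⁻¹' {c}) (X ⁻¹' {x} ∩ Z ⁻¹' {0})
        = cPr P (C ⁻¹' {c}) (X ⁻¹' {x} ∩ Z ⁻¹' {1}))
    (hrPI : cPr P (R ⁻¹' {1}) (X ⁻¹' {x} ∩ Z ⁻¹' {0} ∩ C ⁻¹' {1})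
        = cPr P (R ⁻¹' {1}) (X ⁻¹' {x} ∩ Z ⁻¹' {0} ∩ C ⁻¹' {0})) :
    ∀ c : Fin 2,
      cPr P (R ⁻¹' {1}) (X ⁻¹' {x} ∩ Z ⁻¹' {0} ∩ C ⁻¹' {c})
        = cPr P (R ⁻¹' {1}) (X ⁻¹' {x} ∩ Z ⁻¹' {0}) ∧
      cPr P (C ⁻¹' {c}) (X ⁻¹' {x} ∩ Z ⁻¹' {0} ∩ R ⁻¹' {1})
        = cPr P (C ⁻¹' {c}) (X ⁻¹' {x} ∩ Z ⁻¹' {1}) := by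

  classical
  set A : Set Ω := X ⁻¹' {x} ∩ Z ⁻¹' {0} with hA
  -- stratum sets
  set S : Fin 2 → Set Ω := fun c => A ∩ C ⁻¹' {c} with hS
  have hmeasA : MeasurableSet A := (hX (measurableSet_singleton x)).inter (hZ (measurableSet_singleton 0))
  have hmeasS : ∀ c, MeasurableSet (S c) := fun c => hmeasA.inter (hC (measurableSet_singleton c))
  have hmeasR : MeasurableSet (R ⁻¹' {1}) := hR (measurableSet_singleton 1)
  have hdisj : Disjoint (S 0) (S 1) := by
    simp only [Set.disjoint_left]
    rintro ω ⟨-, h0⟩ ⟨-, h1'⟩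
    simp only [Set.mem_preimage, Set.mem_singleton_iff] at h0 h1'
    rw [h0] at h1'; exact absurd h1' (by decide)
  have hcov : A = S 0 ∪ S 1 := by
    ext ω
    simp only [hS, Set.mem_union, Set.mem_inter_iff, Set.mem_preimage, Set.mem_singleton_iff]
    have : C ω = 0 ∨ C ω = 1 := by omega
    tauto
  have hcovR : R ⁻¹' {1} ∩ A = (R ⁻¹' {1} ∩ S 0) ∪ (R ⁻¹' {1} ∩ S 1) := by
    rw [hcov, Set.inter_union_distrib_left]
  have hdisjR : Disjoint (R ⁻¹' {1} ∩ S 0) (R ⁻¹' {1} ∩ S 1) :=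
    hdisj.mono Set.inter_subset_right Set.inter_subset_right
  -- real quantities
  set a : Fin 2 → ℝ := fun c => (P (R ⁻¹' {1} ∩ S c)).toReal with ha
  set b : Fin 2 → ℝ := fun c => (P (S c)).toReal with hb
  have hfin : ∀ s : Set Ω, P s ≠ ⊤ := fun s => (measure_lt_top P s).ne
  have hbpos : ∀ c, 0 < b c := by
    intro c
    exact ENNReal.toReal_pos (h2 c).ne' (hfin _)
  have hanonneg : ∀ c, 0 ≤ a c := fun c => ENNReal.toReal_nonneg
  have hPA : (P A).toReal = b 0 + b 1 := by
    rw [hcov, measure_union hdisj (hmeasS 1), ENNReal.toReal_add (hfin _) (hfin _)]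
  have hPRA : (P (R ⁻¹' {1} ∩ A)).toReal = a 0 + a 1 := by
    rw [hcovR, measure_union hdisjR (hmeasR.inter (hmeasS 1)),
      ENNReal.toReal_add (hfin _) (hfin _)]
  have hRApos : 0 < a 0 + a 1 := by
    rw [← hPRA]
    refine ENNReal.toReal_pos ?_ (hfin _)
    rw [Set.inter_comm]
    exact h3.ne'
  -- cross multiplication from rPI
  have hcross : a 1 * b 0 = a 0 * b 1 := by
    have := hrPI
    simp only [cPr] at this
    rw [div_eq_div_iff (hbpos 1).ne' (hbpos 0).ne'] at this
    exact this
  intro c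
  constructor
  · -- first claim
    show (P (R ⁻¹' {1} ∩ S c)).toReal / (P (S c)).toReal
        = (P (R ⁻¹' {1} ∩ A)).toReal / (P A).toReal
    rw [hPA, hPRA]
    show a c / b c = (a 0 + a 1) / (b 0 + b 1)
    rw [div_eq_div_iff (hbpos c).ne' (show (0:ℝ) < b 0 + b 1 by have := hbpos 0; have := hbpos 1; linarith).ne']
    have hc : c = 0 ∨ c = 1 := by omega
    rcases hc with rfl | rfl <;> nlinarith [hcross]
  · rw [← hTA c]
    show (P (C ⁻¹' {c} ∩ (A ∩ R ⁻¹' {1}))).toReal / (P (A ∩ R ⁻¹' {1})).toReal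
        = (P (C ⁻¹' {c} ∩ A)).toReal / (P A).toReal
    have e1 : C ⁻¹' {c} ∩ (A ∩ R ⁻¹' {1}) = R ⁻¹' {1} ∩ S c := by
      ext ω; simp only [hS, Set.mem_inter_iff]; tauto
    have e2 : C ⁻¹' {c} ∩ A = S c := Set.inter_comm _ _
    have e3 : A ∩ R ⁻¹' {1} = R ⁻¹' {1} ∩ A := Set.inter_comm _ _
    rw [e1, e2, e3, hPA, hPRA]
    show a c / (a 0 + a 1) = b c / (b 0 + b 1)
    rw [div_eq_div_iff hRApos.ne' (show (0:ℝ) < b 0 + b 1 by have := hbpos 0; have := hbpos 1; linarith).ne']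
    have hc : c = 0 ∨ c = 1 := by omega
    rcases hc with rfl | rfl <;> nlinarith [hcross]
end

section
/- Let X : Ω → 𝒳 have countable range, Z, C, R : Ω → {0,1}, and Y an integrable real random variable. Fix x ∈ 𝒳 and assume: P({X=x} ∩ {Z=0} ∩ {C=c} ∩ {R=1}) > 0 for both c ∈ {0,1}; under P(· | {X=x} ∩ {Z=0} ∩ {C=c}) the random variables R and Y are independent for both c (latent missing at random); and E[Y | {X=x} ∩ {Z=0} ∩ {C=1}] = E[Y | {X=x} ∩ {Z=0} ∩ {C=0}] (principal ignorability). Then for both c ∈ {0,1}: E[Y | {X=x} ∩ {Z=0} ∩ {C=c}] = E[Y | {X=x} ∩ {Z=0} ∩ {R=1}]. -/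
open MeasureTheory ProbabilityTheory
open scoped Classical

/-- Key step: if `R` and `Y` are independent under `P[|B]`, then
`∫_{B ∩ {R=1}} Y = P(B ∩ {R=1}) · E[Y|B]`. -/
lemma key_lemma {Ω : Type*} [MeasurableSpace Ω] (P : Measure Ω) [IsProbabilityMeasure P]
    (R : Ω → Fin 2) (Y : Ω → ℝ) (hR : Measurable R) (hYint : Integrable Y P)
    (B : Set Ω) (hB : MeasurableSet B) (hBpos : 0 < P B)
    (hInd : IndepFun R Y P[|B]) :
    ∫ ω in B ∩ R ⁻¹' {1}, Y ω ∂P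
      = (P (B ∩ R ⁻¹' {1})).toReal * cExp P Y B := by
  set μ := P[|B] with hμ
  have hBne : P B ≠ 0 := hBpos.ne'
  have hBfin : P B ≠ ⊤ := (measure_lt_top P B).ne
  have : IsProbabilityMeasure μ := cond_isProbabilityMeasure hBne
  set g : Fin 2 → ℝ := fun r => if r = 1 then 1 else 0 with hg
  have hgR : (g ∘ R) = (R ⁻¹' {1}).indicator (1 : Ω → ℝ) := by
    funext ω
    by_cases h : R ω = 1 <;> simp [hg, h, Set.indicator_apply]
  have hSmeas : MeasurableSet (R ⁻¹' {1}) := hR (measurableSet_singleton 1)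
  -- independence of g ∘ R and Y
  have hInd' : IndepFun (g ∘ R) Y μ :=
    hInd.comp (measurable_from_top (f := g)) measurable_id
  -- integrability
  have hYμ : Integrable Y μ := by
    rw [hμ, ProbabilityTheory.cond]
    exact (hYint.restrict (s := B)).smul_measure (ENNReal.inv_ne_top.2 hBne)
  have hgRμ : Integrable (g ∘ R) μ := by
    rw [hgR]
    exact (integrable_const (1:ℝ)).indicator hSmeas
  have hmul := hInd'.integral_mul_eq_mul_integral hgRμ.aestronglyMeasurable hYμ.aestronglyMeasurable
  -- compute the three integrals
  have hint_gR : ∫ ω, (g ∘ R) ω ∂μ = (μ (R ⁻¹' {1})).toReal := by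
    rw [hgR, integral_indicator_one hSmeas, measureReal_def]
  have hcondint : ∀ f : Ω → ℝ, ∫ ω, f ω ∂μ = (P B).toReal⁻¹ * ∫ ω in B, f ω ∂P := by
    intro f
    rw [hμ, ProbabilityTheory.cond, integral_smul_measure, ENNReal.toReal_inv, smul_eq_mul]
  have hint_mul : ∫ ω, ((g ∘ R) * Y) ω ∂μ
      = (P B).toReal⁻¹ * ∫ ω in B ∩ R ⁻¹' {1}, Y ω ∂P := by
    rw [hcondint]
    congr 1
    have : ((g ∘ R) * Y) = (R ⁻¹' {1}).indicator Y := by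
      funext ω
      by_cases h : R ω = 1 <;> simp [hg, h, Set.indicator_apply]
    rw [this, integral_indicator hSmeas, Measure.restrict_restrict hSmeas, Set.inter_comm]
  have hcond_apply : μ (R ⁻¹' {1}) = (P B)⁻¹ * P (B ∩ R ⁻¹' {1}) := cond_apply hB P _
  rw [hint_mul, hint_gR, hcondint Y, hcond_apply] at hmul
  have htB : (P B).toReal ≠ 0 := by
    simp [ENNReal.toReal_ne_zero, hBne, hBfin]
  have hfin1 : P (B ∩ R ⁻¹' {1}) ≠ ⊤ := (measure_lt_top P _).ne
  rw [ENNReal.toReal_mul, ENNReal.toReal_inv] at hmul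
  unfold cExp
  have h2 : (P B).toReal * ((P B).toReal⁻¹ * ∫ ω in B ∩ R ⁻¹' {1}, Y ω ∂P)
      = ∫ ω in B ∩ R ⁻¹' {1}, Y ω ∂P := by field_simp
  rw [← h2, hmul]
  field_simp

/-- Under LMAR and principal ignorability (PI, stated as equality of the stratum-specific
conditional outcome means under control), both stratum-specific outcome means under
control are identified by the mean among control-arm responders. -/
theorem stmt18 {Ω 𝒳 : Type*} [MeasurableSpace Ω]
    [Countable 𝒳] [MeasurableSpace 𝒳] [MeasurableSingletonClass 𝒳]
    (P : Measure Ω) [IsProbabilityMeasure P]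
    (X : Ω → 𝒳) (Z C R : Ω → Fin 2) (Y : Ω → ℝ)
    (hX : Measurable X) (hZ : Measurable Z) (hC : Measurable C) (hR : Measurable R)
    (hYm : Measurable Y) (hYint : Integrable Y P)
    (x : 𝒳)
    (hpos : ∀ c : Fin 2, 0 < P (X ⁻¹' {x} ∩ Z ⁻¹' {0} ∩ C ⁻¹' {c} ∩ R ⁻¹' {1}))
    (hLMAR : ∀ c : Fin 2, IndepFun R Y (P[|X ⁻¹' {x} ∩ Z ⁻¹' {0} ∩ C ⁻¹' {c}]))
    (hPI : cExp P Y (X ⁻¹' {x} ∩ Z ⁻¹' {0} ∩ C ⁻¹' {1})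
        = cExp P Y (X ⁻¹' {x} ∩ Z ⁻¹' {0} ∩ C ⁻¹' {0})) :
    ∀ c : Fin 2,
      cExp P Y (X ⁻¹' {x} ∩ Z ⁻¹' {0} ∩ C ⁻¹' {c})
        = cExp P Y (X ⁻¹' {x} ∩ Z ⁻¹' {0} ∩ R ⁻¹' {1}) := by
  set W : Set Ω := X ⁻¹' {x} ∩ Z ⁻¹' {0} with hW
  set S : Set Ω := R ⁻¹' {1} with hS
  have hWmeas : MeasurableSet W :=
    (hX (measurableSet_singleton x)).inter (hZ (measurableSet_singleton 0))
  have hSmeas : MeasurableSet S := hR (measurableSet_singleton 1)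
  have hAmeas : ∀ c : Fin 2, MeasurableSet (W ∩ C ⁻¹' {c}) :=
    fun c => hWmeas.inter (hC (measurableSet_singleton c))
  have hApos : ∀ c : Fin 2, 0 < P (W ∩ C ⁻¹' {c}) := by
    intro c
    refine lt_of_lt_of_le (hpos c) (measure_mono ?_)
    intro ω hω
    exact ⟨hω.1.1, hω.1.2⟩
  -- apply the key lemma in each stratum
  have hkey : ∀ c : Fin 2, ∫ ω in (W ∩ C ⁻¹' {c}) ∩ S, Y ω ∂P
      = (P ((W ∩ C ⁻¹' {c}) ∩ S)).toReal * cExp P Y (W ∩ C ⁻¹' {c}) := by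
    intro c
    exact key_lemma P R Y hR hYint _ (hAmeas c) (hApos c) (hLMAR c)
  set m : ℝ := cExp P Y (W ∩ C ⁻¹' {0}) with hm
  have hm1 : cExp P Y (W ∩ C ⁻¹' {1}) = m := hPI
  -- decompose W ∩ S
  have hdecomp : W ∩ S = ((W ∩ C ⁻¹' {0}) ∩ S) ∪ ((W ∩ C ⁻¹' {1}) ∩ S) := by
    ext ω
    constructor
    · rintro ⟨hωW, hωS⟩
      by_cases hc : C ω = 0
      · exact Or.inl ⟨⟨hωW, hc⟩, hωS⟩
      · exact Or.inr ⟨⟨hωW, Fin.eq_one_of_ne_zero _ hc⟩, hωS⟩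
    · rintro (⟨⟨h1, _⟩, h2⟩ | ⟨⟨h1, _⟩, h2⟩) <;> exact ⟨h1, h2⟩
  have hdisj : Disjoint ((W ∩ C ⁻¹' {0}) ∩ S) ((W ∩ C ⁻¹' {1}) ∩ S) := by
    rw [Set.disjoint_left]
    rintro ω ⟨⟨_, h0⟩, _⟩ ⟨⟨_, h1⟩, _⟩
    simp only [Set.mem_preimage, Set.mem_singleton_iff] at h0 h1
    rw [h0] at h1; exact absurd h1 (by decide)
  have hmeas01 : MeasurableSet ((W ∩ C ⁻¹' {1}) ∩ S) := (hAmeas 1).inter hSmeas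
  -- integral over W ∩ S
  have hintWS : ∫ ω in W ∩ S, Y ω ∂P
      = (P ((W ∩ C ⁻¹' {0}) ∩ S)).toReal * m + (P ((W ∩ C ⁻¹' {1}) ∩ S)).toReal * m := by
    rw [hdecomp, setIntegral_union hdisj hmeas01 (hYint.integrableOn) (hYint.integrableOn),
      hkey 0, hkey 1, hm1, ← hm]
  have hPWS : P (W ∩ S) = P ((W ∩ C ⁻¹' {0}) ∩ S) + P ((W ∩ C ⁻¹' {1}) ∩ S) := by
    rw [hdecomp, measure_union hdisj hmeas01]
  have hpos' : ∀ c : Fin 2, 0 < P ((W ∩ C ⁻¹' {c}) ∩ S) := by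
    intro c
    exact hpos c
  have hfin : ∀ c : Fin 2, P ((W ∩ C ⁻¹' {c}) ∩ S) ≠ ⊤ := fun c => (measure_lt_top P _).ne
  have htoReal : (P (W ∩ S)).toReal
      = (P ((W ∩ C ⁻¹' {0}) ∩ S)).toReal + (P ((W ∩ C ⁻¹' {1}) ∩ S)).toReal := by
    rw [hPWS, ENNReal.toReal_add (hfin 0) (hfin 1)]
  have htpos : 0 < (P (W ∩ S)).toReal := by
    rw [htoReal]
    have h0 := ENNReal.toReal_pos (hpos' 0).ne' (hfin 0)
    have h1 := ENNReal.toReal_pos (hpos' 1).ne' (hfin 1)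
    linarith
  have hWSval : cExp P Y (W ∩ S) = m := by
    unfold cExp
    rw [hintWS, htoReal]
    have hne : (P ((W ∩ C ⁻¹' {0}) ∩ S)).toReal + (P ((W ∩ C ⁻¹' {1}) ∩ S)).toReal ≠ 0 := by
      rw [← htoReal]; exact htpos.ne'
    rw [div_eq_iff hne]
    ring
  intro c
  have hXZC : X ⁻¹' {x} ∩ Z ⁻¹' {0} ∩ C ⁻¹' {c} = W ∩ C ⁻¹' {c} := rfl
  have hXZR : X ⁻¹' {x} ∩ Z ⁻¹' {0} ∩ R ⁻¹' {1} = W ∩ S := rfl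
  rw [hXZC, hXZR, hWSval]
  fin_cases c
  · rfl
  · exact hm1
end
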